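/- arXiv:2106.06633 — 5 statements merged into one kernel-verified Lean document; each statement's English description precedes it below -/
import Mathlib

section
/- In the probabilistic lambda calculus λ¢ (simply typed lambda calculus with booleans 0 and 1, if-then-else, and a coin constant reducing to 0 or 1 each with probability 1/2, with unrestricted contextual reduction), the reduction relation on probability distributions of terms is not confluent: there exists a term from which two reduction sequences reach two distinct normal distributions. -/
/-- Terms of λ¢ (de Bruijn): variables, abstraction, application,
    booleans `one`/`zero`, if-then-else, and a coin. -/
inductive Tm : Type
  | var : Nat → Tm
  | lam : Tm → Tm
  | app : Tm → Tm → Tm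
  | one : Tm
  | zero : Tm
  | ite : Tm → Tm → Tm → Tm
  | coin : Tm
  deriving DecidableEq

/-- Lifting of de Bruijn indices (indices ≥ d are incremented). -/
def lift (d : Nat) : Tm → Tm
  | .var n => if n < d then .var n else .var (n+1)
  | .lam t => .lam (lift (d+1) t)
  | .app t u => .app (lift d t) (lift d u)
  | .one => .one
  | .zero => .zero
  | .ite c a b => .ite (lift d c) (lift d a) (lift d b)
  | .coin => .coin

/-- Capture-avoiding substitution `t[s/k]` (de Bruijn). -/
def subst : Tm → Nat → Tm → Tm
  | .var n, k, s => if n = k then s else if k < n then .var (n-1) else .var n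
  | .lam t, k, s => .lam (subst t (k+1) (lift 0 s))
  | .app t u, k, s => .app (subst t k s) (subst u k s)
  | .one, _, _ => .one
  | .zero, _, _ => .zero
  | .ite c a b, k, s => .ite (subst c k s) (subst a k s) (subst b k s)
  | .coin, _, _ => .coin

/-- One-step probabilistic reduction `t →_p r` of λ¢:
    β, if-rules (probability 1), coin toss (probability 1/2 each),
    closed under all contexts. -/
inductive Step : Tm → ℚ → Tm → Prop
  | beta (t r) : Step (.app (.lam t) r) 1 (subst t 0 r)
  | iteOne (a b) : Step (.ite .one a b) 1 a
  | iteZero (a b) : Step (.ite .zero a b) 1 b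
  | coinOne : Step .coin (1/2) .one
  | coinZero : Step .coin (1/2) .zero
  | lam {t p t'} : Step t p t' → Step (.lam t) p (.lam t')
  | appL {t p t'} (u) : Step t p t' → Step (.app t u) p (.app t' u)
  | appR {u p u'} (t) : Step u p u' → Step (.app t u) p (.app t u')
  | iteC {c p c'} (a b) : Step c p c' → Step (.ite c a b) p (.ite c' a b)
  | iteA {a p a'} (c b) : Step a p a' → Step (.ite c a b) p (.ite c a' b)
  | iteB {b p b'} (c a) : Step b p b' → Step (.ite c a b) p (.ite c a b')

/-- A term is normal if no probabilistic step applies. -/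
def NormalTm (t : Tm) : Prop := ¬ ∃ p r, Step t p r

/-- (Sub)probability distributions over terms, as finitely supported maps. -/
abbrev PDist := Tm →₀ ℚ

/-- Contraction of one redex occurrence of a term, producing the
    distribution of its results: deterministic rules give a Dirac
    distribution, a coin redex splits 1/2–1/2; closed under contexts. -/
inductive TStep : Tm → PDist → Prop
  | beta (t r) : TStep (.app (.lam t) r) (Finsupp.single (subst t 0 r) 1)
  | iteOne (a b) : TStep (.ite .one a b) (Finsupp.single a 1)
  | iteZero (a b) : TStep (.ite .zero a b) (Finsupp.single b 1)
  | coin : TStep .coin (Finsupp.single Tm.one (1/2) + Finsupp.single Tm.zero (1/2))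
  | lam {t D} : TStep t D → TStep (.lam t) (D.mapDomain .lam)
  | appL {t D} (u) : TStep t D → TStep (.app t u) (D.mapDomain (fun s => .app s u))
  | appR {u D} (t) : TStep u D → TStep (.app t u) (D.mapDomain (fun s => .app t s))
  | iteC {c D} (a b) : TStep c D → TStep (.ite c a b) (D.mapDomain (fun s => .ite s a b))
  | iteA {a D} (c b) : TStep a D → TStep (.ite c a b) (D.mapDomain (fun s => .ite c s b))
  | iteB {b D} (c a) : TStep b D → TStep (.ite c a b) (D.mapDomain (fun s => .ite c a s))

/-- One distribution-reduction step: pick a term `t` in the support,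
    contract one redex occurrence of `t` and redistribute its probability
    mass accordingly (equal results are merged by the `Finsupp` addition). -/
def DStep (D D' : PDist) : Prop :=
  ∃ t E, D t ≠ 0 ∧ TStep t E ∧ D' = D.erase t + D t • E

/-- Multistep distribution reduction. -/
def DSteps : PDist → PDist → Prop := Relation.ReflTransGen DStep

/-- A distribution is normal when every term in its support is normal. -/
def NormalDist (D : PDist) : Prop := ∀ t ∈ D.support, NormalTm t

/-! ### Auxiliary development -/

def isLamB : Tm → Bool | .lam _ => true | _ => false
def isBoolB : Tm → Bool | .one => true | .zero => true | _ => false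

def normb : Tm → Bool
  | .var _ => true
  | .lam t => normb t
  | .app t u => !isLamB t && normb t && normb u
  | .one => true
  | .zero => true
  | .ite c a b => !isBoolB c && normb c && normb a && normb b
  | .coin => false

lemma step_not_normb {t : Tm} {p : ℚ} {r : Tm} (h : Step t p r) : normb t = false := by
  induction h <;> simp_all [normb, isLamB, isBoolB]

lemma normal_of_normb {t : Tm} (h : normb t = true) : NormalTm t := by
  rintro ⟨p, r, hs⟩
  rw [step_not_normb hs] at h
  exact Bool.noConfusion h

lemma dstep_of {t : Tm} {E : PDist} (h : TStep t E) (D D' : PDist) (ht : D t ≠ 0)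
    (hD' : D' = D.erase t + D t • E) : DStep D D' := ⟨t, E, ht, h, hD'⟩

/-- `λy. y x x` with `x` free as var 0 inside. -/
def body : Tm := .lam (.app (.app (.var 0) (.var 1)) (.var 1))
/-- The witness term `(λx. λy. y x x) coin`. -/
def T0 : Tm := .app (.lam body) .coin
/-- Normal forms `λy. y a b`. -/
def N (a b : Tm) : Tm := .lam (.app (.app (.var 0) a) b)
/-- Intermediate CBN terms. -/
def M : Tm := .lam (.app (.app (.var 0) .coin) .coin)
def M₁ : Tm := .lam (.app (.app (.var 0) .one) .coin)
def M₀ : Tm := .lam (.app (.app (.var 0) .zero) .coin)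

noncomputable def EV : PDist :=
  Finsupp.single (N .one .one) (1/2) + Finsupp.single (N .zero .zero) (1/2)
noncomputable def EN : PDist :=
  Finsupp.single (N .one .one) (1/4) + Finsupp.single (N .one .zero) (1/4)
  + Finsupp.single (N .zero .one) (1/4) + Finsupp.single (N .zero .zero) (1/4)

/-- the reduction relation on probability distributions of
    λ¢-terms is not confluent: some term admits two distribution-reduction
    sequences reaching two distinct normal distributions. -/
theorem lambda_coin_not_confluent :
    ∃ (t : Tm) (E₁ E₂ : PDist),
      DSteps (Finsupp.single t 1) E₁ ∧ DSteps (Finsupp.single t 1) E₂ ∧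
      NormalDist E₁ ∧ NormalDist E₂ ∧ E₁ ≠ E₂ := by
  refine ⟨T0, EV, EN, ?_, ?_, ?_, ?_, ?_⟩
  · -- call-by-value
    have s1 : DStep (Finsupp.single T0 1)
        (Finsupp.single (Tm.app (.lam body) .one) (1/2)
          + Finsupp.single (Tm.app (.lam body) .zero) (1/2)) := by
      refine dstep_of (TStep.appR (.lam body) TStep.coin) _ _ ?_ ?_
      · show (Finsupp.single T0 1) T0 ≠ 0
        simp
      · rw [show Tm.app (Tm.lam body) Tm.coin = T0 from rfl,
          Finsupp.erase_single, Finsupp.single_eq_same,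
          Finsupp.mapDomain_add, Finsupp.mapDomain_single, Finsupp.mapDomain_single, zero_add,
          one_smul]
    have s2 : DStep
        (Finsupp.single (Tm.app (.lam body) .one) (1/2)
          + Finsupp.single (Tm.app (.lam body) .zero) (1/2))
        (Finsupp.single (Tm.app (.lam body) .zero) (1/2)
          + Finsupp.single (N .one .one) (1/2)) := by
      refine dstep_of (TStep.beta body .one) _ _ ?_ ?_
      · rw [Finsupp.add_apply, Finsupp.single_eq_same,
          Finsupp.single_eq_of_ne (by decide), add_zero]
        norm_num
      · rw [show subst body 0 .one = N .one .one from by decide,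
          Finsupp.add_apply, Finsupp.single_eq_same,
          Finsupp.single_eq_of_ne (by decide), add_zero,
          Finsupp.erase_add, Finsupp.erase_single,
          Finsupp.erase_single_ne (by decide), zero_add, Finsupp.smul_single]
        norm_num
    have s3 : DStep
        (Finsupp.single (Tm.app (.lam body) .zero) (1/2)
          + Finsupp.single (N .one .one) (1/2)) EV := by
      refine dstep_of (TStep.beta body .zero) _ _ ?_ ?_
      · rw [Finsupp.add_apply, Finsupp.single_eq_same,
          Finsupp.single_eq_of_ne (by decide), add_zero]
        norm_num
      · rw [show subst body 0 .zero = N .zero .zero from by decide,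
          Finsupp.add_apply, Finsupp.single_eq_same,
          Finsupp.single_eq_of_ne (by decide), add_zero,
          Finsupp.erase_add, Finsupp.erase_single,
          Finsupp.erase_single_ne (by decide), zero_add, Finsupp.smul_single, EV]
        norm_num
    exact .head s1 (.head s2 (.head s3 .refl))
  · -- call-by-name
    have s1 : DStep (Finsupp.single T0 1) (Finsupp.single M 1) := by
      refine dstep_of (TStep.beta body .coin) _ _ ?_ ?_
      · show (Finsupp.single T0 1) T0 ≠ 0
        simp
      · rw [show subst body 0 .coin = M from by decide,
          show Tm.app (Tm.lam body) Tm.coin = T0 from rfl,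
          Finsupp.erase_single, Finsupp.single_eq_same, zero_add, one_smul]
    have s2 : DStep (Finsupp.single M 1)
        (Finsupp.single M₁ (1/2) + Finsupp.single M₀ (1/2)) := by
      refine dstep_of (TStep.lam (TStep.appL .coin (TStep.appR (.var 0) TStep.coin))) _ _ ?_ ?_
      · show (Finsupp.single M 1) M ≠ 0
        simp
      · rw [show Tm.lam (.app (.app (.var 0) .coin) .coin) = M from rfl,
          Finsupp.erase_single, Finsupp.single_eq_same, zero_add, one_smul,
          Finsupp.mapDomain_add, Finsupp.mapDomain_single, Finsupp.mapDomain_single,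
          Finsupp.mapDomain_add, Finsupp.mapDomain_single, Finsupp.mapDomain_single,
          Finsupp.mapDomain_add, Finsupp.mapDomain_single, Finsupp.mapDomain_single]
        rfl
    have s3 : DStep (Finsupp.single M₁ (1/2) + Finsupp.single M₀ (1/2))
        (Finsupp.single M₀ (1/2)
          + (Finsupp.single (N .one .one) (1/4) + Finsupp.single (N .one .zero) (1/4))) := by
      refine dstep_of (TStep.lam (TStep.appR (.app (.var 0) .one) TStep.coin)) _ _ ?_ ?_
      · rw [show Tm.lam (.app (.app (.var 0) .one) .coin) = M₁ from rfl,
          Finsupp.add_apply, Finsupp.single_eq_same,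
          Finsupp.single_eq_of_ne (by decide), add_zero]
        norm_num
      · rw [show Tm.lam (.app (.app (.var 0) .one) .coin) = M₁ from rfl,
          Finsupp.add_apply, Finsupp.single_eq_same,
          Finsupp.single_eq_of_ne (by decide), add_zero,
          Finsupp.erase_add, Finsupp.erase_single,
          Finsupp.erase_single_ne (by decide), zero_add,
          Finsupp.mapDomain_add, Finsupp.mapDomain_single, Finsupp.mapDomain_single,
          Finsupp.mapDomain_add, Finsupp.mapDomain_single, Finsupp.mapDomain_single,
          smul_add, Finsupp.smul_single, Finsupp.smul_single,
          show Tm.lam (.app (.app (.var 0) .one) .one) = N .one .one from rfl,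
          show Tm.lam (.app (.app (.var 0) .one) .zero) = N .one .zero from rfl]
        norm_num
    have s4 : DStep
        (Finsupp.single M₀ (1/2)
          + (Finsupp.single (N .one .one) (1/4) + Finsupp.single (N .one .zero) (1/4))) EN := by
      refine dstep_of (TStep.lam (TStep.appR (.app (.var 0) .zero) TStep.coin)) _ _ ?_ ?_
      · rw [show Tm.lam (.app (.app (.var 0) .zero) .coin) = M₀ from rfl,
          Finsupp.add_apply, Finsupp.single_eq_same, Finsupp.add_apply,
          Finsupp.single_eq_of_ne (by decide), Finsupp.single_eq_of_ne (by decide)]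
        norm_num
      · rw [show Tm.lam (.app (.app (.var 0) .zero) .coin) = M₀ from rfl,
          Finsupp.add_apply, Finsupp.single_eq_same, Finsupp.add_apply,
          Finsupp.single_eq_of_ne (by decide), Finsupp.single_eq_of_ne (by decide),
          Finsupp.erase_add, Finsupp.erase_single, Finsupp.erase_add,
          Finsupp.erase_single_ne (by decide), Finsupp.erase_single_ne (by decide), zero_add,
          Finsupp.mapDomain_add, Finsupp.mapDomain_single, Finsupp.mapDomain_single,
          Finsupp.mapDomain_add, Finsupp.mapDomain_single, Finsupp.mapDomain_single,
          smul_add, Finsupp.smul_single, Finsupp.smul_single, EN]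
        norm_num
        rw [show Tm.lam (.app (.app (.var 0) .zero) .one) = N .zero .one from rfl,
          show Tm.lam (.app (.app (.var 0) .zero) .zero) = N .zero .zero from rfl]
        abel
    exact .head s1 (.head s2 (.head s3 (.head s4 .refl)))
  · -- EV normal
    intro t ht
    simp only [EV, Finsupp.mem_support_iff, Finsupp.add_apply, Finsupp.single_apply] at ht
    split_ifs at ht <;>
      first
        | (subst_vars; exact normal_of_normb (by decide))
        | norm_num at ht
  · -- EN normal
    intro t ht
    simp only [EN, Finsupp.mem_support_iff, Finsupp.add_apply, Finsupp.single_apply] at ht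
    split_ifs at ht <;>
      first
        | (subst_vars; exact normal_of_normb (by decide))
        | norm_num at ht
  · -- distinct
    intro h
    have h2 := congrFun (congrArg DFunLike.coe h) (N .one .zero)
    rw [EV, EN] at h2
    simp only [Finsupp.add_apply, Finsupp.single_apply, N] at h2
    split_ifs at h2 <;> simp_all
end

section
/- Every simply typed term of the calculus λ¢ is strongly normalizing: there is no infinite reduction sequence starting from a well-typed term, where a reduction step is any single-redex step (including a coin toss to either 0 or 1). -/
/-- Simple types: booleans and arrows. -/
inductive Ty : Type
  | bool : Ty
  | arrow : Ty → Ty → Ty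
  deriving DecidableEq

/-- Simply typed λ¢ (unrestricted type system, Table 2). -/
inductive HasTy : List Ty → Tm → Ty → Prop
  | var {Γ n A} : Γ[n]? = some A → HasTy Γ (.var n) A
  | lam {Γ t A B} : HasTy (A :: Γ) t B → HasTy Γ (.lam t) (.arrow A B)
  | app {Γ t u A B} : HasTy Γ t (.arrow A B) → HasTy Γ u A → HasTy Γ (.app t u) B
  | one {Γ} : HasTy Γ .one .bool
  | zero {Γ} : HasTy Γ .zero .bool
  | coin {Γ} : HasTy Γ .coin .bool
  | ite {Γ c a b A} : HasTy Γ c .bool → HasTy Γ a A → HasTy Γ b A →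
      HasTy Γ (.ite c a b) A

/-! ### Auxiliary: renaming and parallel substitution (sigma calculus) -/

def upr (ρ : Nat → Nat) : Nat → Nat
  | 0 => 0
  | n+1 => ρ n + 1

def ren (ρ : Nat → Nat) : Tm → Tm
  | .var n => .var (ρ n)
  | .lam t => .lam (ren (upr ρ) t)
  | .app t u => .app (ren ρ t) (ren ρ u)
  | .one => .one
  | .zero => .zero
  | .ite c a b => .ite (ren ρ c) (ren ρ a) (ren ρ b)
  | .coin => .coin

def ups (σ : Nat → Tm) : Nat → Tm
  | 0 => .var 0
  | n+1 => ren Nat.succ (σ n)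

def ps (σ : Nat → Tm) : Tm → Tm
  | .var n => σ n
  | .lam t => .lam (ps (ups σ) t)
  | .app t u => .app (ps σ t) (ps σ u)
  | .one => .one
  | .zero => .zero
  | .ite c a b => .ite (ps σ c) (ps σ a) (ps σ b)
  | .coin => .coin

theorem ren_ren (ρ' ρ : Nat → Nat) (t : Tm) : ren ρ' (ren ρ t) = ren (ρ' ∘ ρ) t := by
  induction t generalizing ρ ρ' with
  | var n => rfl
  | lam t ih =>
      simp only [ren, ih]
      congr 2
      funext n; cases n <;> rfl
  | app t u iht ihu => simp [ren, iht, ihu]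
  | ite c a b ihc iha ihb => simp [ren, ihc, iha, ihb]
  | _ => rfl

theorem ps_ren (σ : Nat → Tm) (ρ : Nat → Nat) (t : Tm) : ps σ (ren ρ t) = ps (σ ∘ ρ) t := by
  induction t generalizing ρ σ with
  | var n => rfl
  | lam t ih =>
      simp only [ren, ps, ih]
      congr 2
      funext n; cases n <;> rfl
  | app t u iht ihu => simp [ren, ps, iht, ihu]
  | ite c a b ihc iha ihb => simp [ren, ps, ihc, iha, ihb]
  | _ => rfl

theorem ren_ps (ρ : Nat → Nat) (σ : Nat → Tm) (t : Tm) :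
    ren ρ (ps σ t) = ps (fun n => ren ρ (σ n)) t := by
  induction t generalizing ρ σ with
  | var n => rfl
  | lam t ih =>
      simp only [ren, ps, ih]
      congr 2
      funext n; cases n with
      | zero => rfl
      | succ n =>
          show ren (upr ρ) (ren Nat.succ (σ n)) = ren Nat.succ (ren ρ (σ n))
          rw [ren_ren, ren_ren]
          congr 1
  | app t u iht ihu => simp [ren, ps, iht, ihu]
  | ite c a b ihc iha ihb => simp [ren, ps, ihc, iha, ihb]
  | _ => rfl

theorem ps_ps (σ' σ : Nat → Tm) (t : Tm) :
    ps σ' (ps σ t) = ps (fun n => ps σ' (σ n)) t := by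
  induction t generalizing σ σ' with
  | var n => rfl
  | lam t ih =>
      simp only [ps, ih]
      congr 2
      funext n; cases n with
      | zero => rfl
      | succ n =>
          show ps (ups σ') (ren Nat.succ (σ n)) = ren Nat.succ (ps σ' (σ n))
          rw [ps_ren, ren_ps]
          rfl
  | app t u iht ihu => simp [ps, iht, ihu]
  | ite c a b ihc iha ihb => simp [ps, ihc, iha, ihb]
  | _ => rfl

theorem ps_var (t : Tm) : ps Tm.var t = t := by
  induction t with
  | var n => rfl
  | lam t ih =>
      simp only [ps]
      congr 1
      have : ups Tm.var = Tm.var := by funext n; cases n <;> rfl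
      rw [this, ih]
  | app t u iht ihu => simp [ps, iht, ihu]
  | ite c a b ihc iha ihb => simp [ps, ihc, iha, ihb]
  | _ => rfl

theorem ren_eq_ps (ρ : Nat → Nat) (t : Tm) : ren ρ t = ps (fun n => .var (ρ n)) t := by
  induction t generalizing ρ with
  | var n => rfl
  | lam t ih =>
      simp only [ren, ps, ih]
      congr 2
      funext n; cases n <;> rfl
  | app t u iht ihu => simp [ren, ps, iht, ihu]
  | ite c a b ihc iha ihb => simp [ren, ps, ihc, iha, ihb]
  | _ => rfl

theorem ren_id (t : Tm) : ren id t = t := by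
  rw [ren_eq_ps]
  exact ps_var t

theorem lift_eq (d : Nat) (t : Tm) :
    lift d t = ren (fun n => if n < d then n else n + 1) t := by
  induction t generalizing d with
  | var n => simp [lift, ren]; split <;> rfl
  | lam t ih =>
      simp only [lift, ren, ih]
      congr 2
      funext n; cases n with
      | zero => simp [upr]
      | succ n => simp only [upr]; by_cases h : n < d <;> simp [h, Nat.succ_lt_succ_iff]
  | app t u iht ihu => simp [lift, ren, iht, ihu]
  | ite c a b ihc iha ihb => simp [lift, ren, ihc, iha, ihb]
  | _ => rfl

def sF (k : Nat) (s : Tm) (n : Nat) : Tm :=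
  if n = k then s else if k < n then .var (n-1) else .var n

theorem subst_eq (t : Tm) (k : Nat) (s : Tm) : subst t k s = ps (sF k s) t := by
  induction t generalizing k s with
  | var n => rfl
  | lam t ih =>
      simp only [subst, ps, ih]
      congr 2
      funext n; cases n with
      | zero => simp [ups, sF]
      | succ n =>
          show sF (k+1) (lift 0 s) (n+1) = ren Nat.succ (sF k s n)
          rw [lift_eq]
          simp only [sF]
          rcases Nat.lt_trichotomy n k with h | h | h
          · rw [if_neg (by omega), if_neg (by omega), if_neg (by omega), if_neg (by omega)]
            rfl
          · subst h; rw [if_pos rfl, if_pos rfl]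
            have : (fun m => if m < 0 then m else m + 1) = Nat.succ := by
              funext m; simp
            rw [this]
          · rw [if_neg (by omega), if_pos (by omega), if_neg (by omega), if_pos h]
            simp only [ren]
            congr 1
            omega
  | app t u iht ihu => simp [subst, ps, iht, ihu]
  | ite c a b ihc iha ihb => simp [subst, ps, ihc, iha, ihb]
  | _ => rfl

theorem K1 (ρ : Nat → Nat) (t u : Tm) :
    subst (ren (upr ρ) t) 0 (ren ρ u) = ren ρ (subst t 0 u) := by
  rw [subst_eq, subst_eq, ps_ren, ren_ps]
  congr 1
  funext n; cases n with
  | zero => simp [Function.comp, upr, sF]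
  | succ n => simp [Function.comp, upr, sF, ren]

theorem K2 (a b : Tm) (k : Nat) (u : Tm) :
    subst (subst a 0 b) k u = subst (subst a (k+1) (lift 0 u)) 0 (subst b k u) := by
  simp only [subst_eq, lift_eq]
  rw [ps_ps, ps_ps]
  congr 1
  funext n
  cases n with
  | zero => simp [sF, ps]
  | succ n =>
      have e1 : sF 0 b (n+1) = Tm.var n := by simp [sF]
      rw [e1]
      show sF k u n = ps (sF 0 (ps (sF k u) b))
        (sF (k+1) (ren (fun m => if m < 0 then m else m+1) u) (n+1))
      rcases Nat.lt_trichotomy n k with h | h | h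
      · have e2 : sF (k+1) (ren (fun m => if m < 0 then m else m+1) u) (n+1)
            = Tm.var (n+1) := by
          simp only [sF]; rw [if_neg (by omega), if_neg (by omega)]
        rw [e2]
        show sF k u n = sF 0 (ps (sF k u) b) (n+1)
        simp only [sF]
        rw [if_neg (by omega), if_neg (by omega), if_neg (by omega), if_pos (by omega)]
        simp
      · subst h
        have e2 : sF (n+1) (ren (fun m => if m < 0 then m else m+1) u) (n+1)
            = ren (fun m => if m < 0 then m else m+1) u := by simp [sF]
        rw [e2]
        have e3 : sF n u n = u := by simp [sF]
        rw [e3, ps_ren]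
        have : (sF 0 (ps (sF n u) b) ∘ fun m => if m < 0 then m else m + 1) = Tm.var := by
          funext m; simp [sF, Function.comp]
        rw [this, ps_var]
      · have e2 : sF (k+1) (ren (fun m => if m < 0 then m else m+1) u) (n+1)
            = Tm.var n := by
          simp only [sF]; rw [if_neg (by omega), if_pos (by omega)]
          simp
        rw [e2]
        show sF k u n = sF 0 (ps (sF k u) b) n
        simp only [sF]
        rw [if_neg (by omega), if_pos h, if_neg (by omega), if_pos (by omega)]

def scons (u : Tm) (σ : Nat → Tm) : Nat → Tm
  | 0 => u
  | n+1 => σ n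

theorem K4 (ρ : Nat → Nat) (σ : Nat → Tm) (t u : Tm) :
    subst (ren (upr ρ) (ps (ups σ) t)) 0 u = ps (scons u (fun n => ren ρ (σ n))) t := by
  rw [subst_eq, ps_ren, ps_ps]
  congr 1
  funext n; cases n with
  | zero => simp [ups, Function.comp, upr, sF, ps, scons]
  | succ n =>
      show ps (sF 0 u ∘ upr ρ) (ren Nat.succ (σ n)) = ren ρ (σ n)
      rw [ps_ren]
      conv_rhs => rw [ren_eq_ps]
      congr 1

/-! ### Step lemmas -/

def Red (t t' : Tm) : Prop := ∃ p, Step t p t'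

def SN (t : Tm) : Prop := Acc (fun a b => Red b a) t

theorem step_ren {t p t'} (h : Step t p t') (ρ : Nat → Nat) :
    Step (ren ρ t) p (ren ρ t') := by
  induction h generalizing ρ with
  | beta t r =>
      have := Step.beta (ren (upr ρ) t) (ren ρ r)
      rwa [K1] at this
  | iteOne a b => exact Step.iteOne _ _
  | iteZero a b => exact Step.iteZero _ _
  | coinOne => exact Step.coinOne
  | coinZero => exact Step.coinZero
  | lam _ ih => exact Step.lam (ih _)
  | appL u _ ih => exact Step.appL _ (ih _)
  | appR t _ ih => exact Step.appR _ (ih _)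
  | iteC a b _ ih => exact Step.iteC _ _ (ih _)
  | iteA c b _ ih => exact Step.iteA _ _ (ih _)
  | iteB c a _ ih => exact Step.iteB _ _ (ih _)

theorem step_anti_ren : ∀ (t : Tm) (ρ : Nat → Nat) {p s},
    Step (ren ρ t) p s → ∃ t', s = ren ρ t' ∧ Step t p t' := by
  intro t
  induction t with
  | var n => intro ρ p s h; cases h
  | one => intro ρ p s h; cases h
  | zero => intro ρ p s h; cases h
  | coin =>
      intro ρ p s h
      cases h
      · exact ⟨.one, rfl, Step.coinOne⟩
      · exact ⟨.zero, rfl, Step.coinZero⟩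
  | lam t ih =>
      intro ρ p s h
      cases h with
      | lam h' =>
          obtain ⟨t', rfl, ht'⟩ := ih _ h'
          exact ⟨.lam t', rfl, Step.lam ht'⟩
  | app a b iha ihb =>
      intro ρ p s h
      simp only [ren] at h
      generalize hq : Tm.app (ren ρ a) (ren ρ b) = q at h
      cases h with
      | beta t r =>
          injection hq with e1 e2
          subst e2
          cases a <;> simp [ren] at e1
          rename_i a₀
          subst e1
          exact ⟨subst a₀ 0 b, K1 ρ a₀ b, Step.beta a₀ b⟩
      | iteOne x y => simp at hq
      | iteZero x y => simp at hq
      | coinOne => simp at hq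
      | coinZero => simp at hq
      | lam h' => simp at hq
      | iteC x y h' => simp at hq
      | iteA x y h' => simp at hq
      | iteB x y h' => simp at hq
      | appL u h' =>
          injection hq with e1 e2
          subst e1; subst e2
          obtain ⟨a', rfl, ha'⟩ := iha _ h'
          exact ⟨.app a' b, rfl, Step.appL _ ha'⟩
      | appR t h' =>
          injection hq with e1 e2
          subst e1; subst e2
          obtain ⟨b', rfl, hb'⟩ := ihb _ h'
          exact ⟨.app a b', rfl, Step.appR _ hb'⟩
  | ite c a b ihc iha ihb =>
      intro ρ p s h
      simp only [ren] at h
      generalize hq : Tm.ite (ren ρ c) (ren ρ a) (ren ρ b) = q at h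
      cases h with
      | iteOne x y =>
          injection hq with e1 e2 e3
          subst e2; subst e3
          cases c <;> simp [ren] at e1
          exact ⟨a, rfl, Step.iteOne _ _⟩
      | iteZero x y =>
          injection hq with e1 e2 e3
          subst e2; subst e3
          cases c <;> simp [ren] at e1
          exact ⟨b, rfl, Step.iteZero _ _⟩
      | beta x y => simp at hq
      | coinOne => simp at hq
      | coinZero => simp at hq
      | lam h' => simp at hq
      | appL x h' => simp at hq
      | appR x h' => simp at hq
      | iteC x y h' =>
          injection hq with e1 e2 e3
          subst e1; subst e2; subst e3
          obtain ⟨c', rfl, hc'⟩ := ihc _ h'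
          exact ⟨.ite c' a b, rfl, Step.iteC _ _ hc'⟩
      | iteA x y h' =>
          injection hq with e1 e2 e3
          subst e1; subst e2; subst e3
          obtain ⟨a', rfl, ha'⟩ := iha _ h'
          exact ⟨.ite c a' b, rfl, Step.iteA _ _ ha'⟩
      | iteB x y h' =>
          injection hq with e1 e2 e3
          subst e1; subst e2; subst e3
          obtain ⟨b', rfl, hb'⟩ := ihb _ h'
          exact ⟨.ite c a b', rfl, Step.iteB _ _ hb'⟩

theorem step_subst {t p t'} (h : Step t p t') (k : Nat) (u : Tm) :
    Step (subst t k u) p (subst t' k u) := by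
  induction h generalizing k u with
  | beta t r =>
      have := Step.beta (subst t (k+1) (lift 0 u)) (subst r k u)
      rw [← K2] at this
      exact this
  | iteOne a b => exact Step.iteOne _ _
  | iteZero a b => exact Step.iteZero _ _
  | coinOne => exact Step.coinOne
  | coinZero => exact Step.coinZero
  | lam _ ih => exact Step.lam (ih _ _)
  | appL u _ ih => exact Step.appL _ (ih _ _)
  | appR t _ ih => exact Step.appR _ (ih _ _)
  | iteC a b _ ih => exact Step.iteC _ _ (ih _ _)
  | iteA c b _ ih => exact Step.iteA _ _ (ih _ _)
  | iteB c a _ ih => exact Step.iteB _ _ (ih _ _)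

theorem red_ren {t t'} (h : Red t t') (ρ : Nat → Nat) : Red (ren ρ t) (ren ρ t') :=
  ⟨h.choose, step_ren h.choose_spec ρ⟩

theorem sn_ren {t} (h : SN t) (ρ : Nat → Nat) : SN (ren ρ t) := by
  induction h generalizing ρ with
  | intro t _ ih =>
      refine Acc.intro _ fun s hs => ?_
      obtain ⟨p, hst⟩ := hs
      obtain ⟨t', rfl, ht'⟩ := step_anti_ren t ρ hst
      exact ih t' ⟨p, ht'⟩ ρ

theorem sn_lam {t} (h : SN t) : SN (Tm.lam t) := by
  induction h with
  | intro t _ ih =>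
      refine Acc.intro _ fun s hs => ?_
      obtain ⟨p, hst⟩ := hs
      cases hst with
      | lam h' => exact ih _ ⟨_, h'⟩

/-! ### Step inversion lemmas -/

theorem app_step_inv {a b : Tm} {p s} (h : Step (.app a b) p s) :
    (∃ t₀, a = .lam t₀ ∧ s = subst t₀ 0 b) ∨
    (∃ a', Step a p a' ∧ s = .app a' b) ∨
    (∃ b', Step b p b' ∧ s = .app a b') := by
  cases h with
  | beta t r => exact Or.inl ⟨t, rfl, rfl⟩
  | appL u h' => exact Or.inr (Or.inl ⟨_, h', rfl⟩)
  | appR t h' => exact Or.inr (Or.inr ⟨_, h', rfl⟩)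

theorem lam_step_inv {t : Tm} {p s} (h : Step (.lam t) p s) :
    ∃ t', Step t p t' ∧ s = .lam t' := by
  cases h with
  | lam h' => exact ⟨_, h', rfl⟩

theorem ite_step_inv {c a b : Tm} {p s} (h : Step (.ite c a b) p s) :
    (c = .one ∧ s = a) ∨ (c = .zero ∧ s = b) ∨
    (∃ c', Step c p c' ∧ s = .ite c' a b) ∨
    (∃ a', Step a p a' ∧ s = .ite c a' b) ∨
    (∃ b', Step b p b' ∧ s = .ite c a b') := by
  cases h with
  | iteOne x y => exact Or.inl ⟨rfl, rfl⟩
  | iteZero x y => exact Or.inr (Or.inl ⟨rfl, rfl⟩)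
  | iteC x y h' => exact Or.inr (Or.inr (Or.inl ⟨_, h', rfl⟩))
  | iteA x y h' => exact Or.inr (Or.inr (Or.inr (Or.inl ⟨_, h', rfl⟩)))
  | iteB x y h' => exact Or.inr (Or.inr (Or.inr (Or.inr ⟨_, h', rfl⟩)))

theorem sn_one : SN .one := Acc.intro _ fun _ hs => by obtain ⟨p, st⟩ := hs; cases st
theorem sn_zero : SN .zero := Acc.intro _ fun _ hs => by obtain ⟨p, st⟩ := hs; cases st
theorem sn_var (n : Nat) : SN (.var n) :=
  Acc.intro _ fun _ hs => by obtain ⟨p, st⟩ := hs; cases st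
theorem sn_coin : SN .coin := Acc.intro _ fun s hs => by
  obtain ⟨p, st⟩ := hs
  cases st with
  | coinOne => exact sn_one
  | coinZero => exact sn_zero

/-! ### Reducibility -/

def Reducible : Ty → Tm → Prop
  | .bool, t => SN t
  | .arrow A B, t => SN t ∧ ∀ ρ u, Reducible A u → Reducible B (.app (ren ρ t) u)

def Neutral : Tm → Prop
  | .lam _ => False
  | _ => True

theorem neutral_ren_ne_lam {t : Tm} (h : Neutral t) (ρ : Nat → Nat) (c : Tm) :
    ren ρ t ≠ .lam c := by
  cases t <;> simp [ren, Neutral] at h ⊢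

theorem cr1 (A : Ty) {t : Tm} (h : Reducible A t) : SN t := by
  cases A with
  | bool => exact h
  | arrow A B => exact h.1

theorem cr2 (A : Ty) : ∀ {t t'}, Reducible A t → Red t t' → Reducible A t' := by
  induction A with
  | bool => intro t t' h r; exact h.inv r
  | arrow A B ihA ihB =>
      intro t t' h r
      refine ⟨h.1.inv r, fun ρ u hu => ?_⟩
      obtain ⟨p, st⟩ := r
      exact ihB (h.2 ρ u hu) ⟨p, Step.appL u (step_ren st ρ)⟩

theorem renC (A : Ty) : ∀ {t} (ρ : Nat → Nat), Reducible A t → Reducible A (ren ρ t) := by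
  induction A with
  | bool => intro t ρ h; exact sn_ren h ρ
  | arrow A B ihA ihB =>
      intro t ρ h
      refine ⟨sn_ren h.1 ρ, fun ρ' u hu => ?_⟩
      rw [ren_ren]
      exact h.2 (ρ' ∘ ρ) u hu

theorem cr3 (A : Ty) : ∀ {t}, Neutral t → (∀ t', Red t t' → Reducible A t') →
    Reducible A t := by
  induction A with
  | bool =>
      intro t _ h
      exact Acc.intro t fun s hs => h s hs
  | arrow A B ihA ihB =>
      intro t nt h
      have snt : SN t := Acc.intro t fun s hs => cr1 _ (h s hs)
      refine ⟨snt, fun ρ u hu => ?_⟩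
      have snu : SN u := cr1 A hu
      revert hu
      induction snu with
      | intro u _ ihU =>
          intro hu
          refine ihB trivial ?_
          intro s hs
          obtain ⟨p, st⟩ := hs
          rcases app_step_inv st with ⟨t₀, e, rfl⟩ | ⟨a', st', rfl⟩ | ⟨b', st', rfl⟩
          · exact absurd e (neutral_ren_ne_lam nt ρ t₀)
          · obtain ⟨t', rfl, stt⟩ := step_anti_ren t ρ st'
            exact (h t' ⟨p, stt⟩).2 ρ u hu
          · exact ihU b' ⟨p, st'⟩ (cr2 A hu ⟨p, st'⟩)

theorem reducible_var (A : Ty) (n : Nat) : Reducible A (.var n) :=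
  cr3 A trivial (fun t' r => absurd r (by rintro ⟨p, st⟩; cases st))

theorem lam_red (A B : Ty) (t : Tm) (snt : SN t) :
    (∀ u, Reducible A u → Reducible B (subst t 0 u)) →
    ∀ u, Reducible A u → Reducible B (.app (.lam t) u) := by
  induction snt with
  | intro t _ ihT =>
      intro H u hu
      have snu : SN u := cr1 A hu
      revert hu
      induction snu with
      | intro u _ ihU =>
          intro hu
          refine cr3 B trivial ?_
          intro s hs
          obtain ⟨p, st⟩ := hs
          rcases app_step_inv st with ⟨t₀, e, rfl⟩ | ⟨a', st', rfl⟩ | ⟨b', st', rfl⟩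
          · cases e; exact H u hu
          · obtain ⟨t', stt, rfl⟩ := lam_step_inv st'
            exact ihT t' ⟨p, stt⟩
              (fun v hv => cr2 B (H v hv) ⟨p, step_subst stt 0 v⟩) u hu
          · exact ihU b' ⟨p, st'⟩ (cr2 A hu ⟨p, st'⟩)

theorem ite_red (A : Ty) : ∀ c, SN c → ∀ a, SN a → ∀ b, SN b →
    Reducible A a → Reducible A b → Reducible A (.ite c a b) := by
  intro c snc
  induction snc with
  | intro c _ ihc =>
      intro a sna
      induction sna with
      | intro a _ iha =>
          intro b snb
          induction snb with
          | intro b _ ihb =>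
              intro ha hb
              refine cr3 A trivial ?_
              intro s hs
              obtain ⟨p, st⟩ := hs
              rcases ite_step_inv st with ⟨rfl, rfl⟩ | ⟨rfl, rfl⟩ |
                ⟨c', st', rfl⟩ | ⟨a', st', rfl⟩ | ⟨b', st', rfl⟩
              · exact ha
              · exact hb
              · exact ihc c' ⟨p, st'⟩ a (cr1 A ha) b (cr1 A hb) ha hb
              · exact iha a' ⟨p, st'⟩ b (cr1 A hb) (cr2 A ha ⟨p, st'⟩) hb
              · exact ihb b' ⟨p, st'⟩ ha (cr2 A hb ⟨p, st'⟩)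

/-! ### Fundamental lemma -/

theorem fundamental {Γ : List Ty} {t : Tm} {A : Ty} (h : HasTy Γ t A) :
    ∀ σ : Nat → Tm, (∀ n B, Γ[n]? = some B → Reducible B (σ n)) →
    Reducible A (ps σ t) := by
  induction h with
  | var hΓ => intro σ hσ; exact hσ _ _ hΓ
  | @lam Γ t A B _ ih =>
      intro σ hσ
      have hups : ∀ n C, (A :: Γ)[n]? = some C → Reducible C (ups σ n) := by
        intro n C hC
        cases n with
        | zero => simp at hC; subst hC; exact reducible_var A 0
        | succ n => exact renC _ Nat.succ (hσ n C (by simpa using hC))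
      have hT : Reducible B (ps (ups σ) t) := ih (ups σ) hups
      refine ⟨sn_lam (cr1 B hT), fun ρ u hu => ?_⟩
      show Reducible B (.app (.lam (ren (upr ρ) (ps (ups σ) t))) u)
      refine lam_red A B _ (sn_ren (cr1 B hT) (upr ρ)) ?_ u hu
      intro v hv
      rw [K4]
      apply ih
      intro n C hC
      cases n with
      | zero => simp at hC; subst hC; exact hv
      | succ n => exact renC _ ρ (hσ n C (by simpa using hC))
  | app ht hu iht ihu =>
      intro σ hσ
      have h1 := iht σ hσ
      have h2 := ihu σ hσ
      have h3 := h1.2 id (ps σ _) h2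
      rwa [ren_id] at h3
  | one => intro σ hσ; exact sn_one
  | zero => intro σ hσ; exact sn_zero
  | coin => intro σ hσ; exact sn_coin
  | ite hc ha hb ihc iha ihb =>
      intro σ hσ
      exact ite_red _ _ (ihc σ hσ) _ (cr1 _ (iha σ hσ)) _ (cr1 _ (ihb σ hσ))
        (iha σ hσ) (ihb σ hσ)

theorem sn_no_inf : ∀ t, SN t → ∀ f : Nat → Tm, f 0 = t →
    (∀ n, ∃ p, Step (f n) p (f (n+1))) → False := by
  intro t snt
  induction snt with
  | intro t _ ih =>
      intro f h0 hstep
      have h1 : Red t (f 1) := by have := hstep 0; rw [h0] at this; exact this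
      exact ih (f 1) h1 (fun n => f (n+1)) rfl (fun n => hstep (n+1))
/-- every simply typed λ¢-term is strongly normalizing:
    no infinite reduction sequence starts from a well-typed term. -/
theorem strong_normalization {Γ : List Ty} {t : Tm} {A : Ty} (h : HasTy Γ t A) :
    ¬ ∃ f : Nat → Tm, f 0 = t ∧ ∀ n, ∃ p, Step (f n) p (f (n+1)) := by
  rintro ⟨f, h0, hstep⟩
  have hred : Reducible A (ps Tm.var t) :=
    fundamental h Tm.var (fun n B _ => reducible_var B n)
  rw [ps_var] at hred
  exact sn_no_inf t (cr1 A hred) f h0 hstep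
end

section
/- In λ¢ with the coin rule replaced by the deterministic rule coin → 0 ⊕_{1/2} 1 (internalising the probability distribution as a term former ⊕_p), the resulting rewrite system is confluent. -/
/-- Terms of λ¢ extended with a superposition constructor `sup p t r`
    (written t ⊕_p r), internalising probability distributions. -/
inductive Tm2 : Type
  | var : Nat → Tm2
  | lam : Tm2 → Tm2
  | app : Tm2 → Tm2 → Tm2
  | one : Tm2
  | zero : Tm2
  | ite : Tm2 → Tm2 → Tm2 → Tm2
  | coin : Tm2
  | sup : ℚ → Tm2 → Tm2 → Tm2
  deriving DecidableEq

def lift2 (d : Nat) : Tm2 → Tm2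
  | .var n => if n < d then .var n else .var (n+1)
  | .lam t => .lam (lift2 (d+1) t)
  | .app t u => .app (lift2 d t) (lift2 d u)
  | .one => .one
  | .zero => .zero
  | .ite c a b => .ite (lift2 d c) (lift2 d a) (lift2 d b)
  | .coin => .coin
  | .sup p t u => .sup p (lift2 d t) (lift2 d u)

def subst2 : Tm2 → Nat → Tm2 → Tm2
  | .var n, k, s => if n = k then s else if k < n then .var (n-1) else .var n
  | .lam t, k, s => .lam (subst2 t (k+1) (lift2 0 s))
  | .app t u, k, s => .app (subst2 t k s) (subst2 u k s)
  | .one, _, _ => .one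
  | .zero, _, _ => .zero
  | .ite c a b, k, s => .ite (subst2 c k s) (subst2 a k s) (subst2 b k s)
  | .coin, _, _ => .coin
  | .sup p t u, k, s => .sup p (subst2 t k s) (subst2 u k s)

/-- Deterministic reduction: as in λ¢, but the coin deterministically
    reduces to its distribution 0 ⊕_{1/2} 1; closed under all contexts,
    including both components of ⊕. -/
inductive Step2 : Tm2 → Tm2 → Prop
  | beta (t r) : Step2 (.app (.lam t) r) (subst2 t 0 r)
  | iteOne (a b) : Step2 (.ite .one a b) a
  | iteZero (a b) : Step2 (.ite .zero a b) b
  | coin : Step2 .coin (.sup (1/2) .zero .one)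
  | lam {t t'} : Step2 t t' → Step2 (.lam t) (.lam t')
  | appL {t t'} (u) : Step2 t t' → Step2 (.app t u) (.app t' u)
  | appR {u u'} (t) : Step2 u u' → Step2 (.app t u) (.app t u')
  | iteC {c c'} (a b) : Step2 c c' → Step2 (.ite c a b) (.ite c' a b)
  | iteA {a a'} (c b) : Step2 a a' → Step2 (.ite c a b) (.ite c a' b)
  | iteB {b b'} (c a) : Step2 b b' → Step2 (.ite c a b) (.ite c a b')
  | supL {t t'} (p u) : Step2 t t' → Step2 (.sup p t u) (.sup p t' u)
  | supR {u u'} (p t) : Step2 u u' → Step2 (.sup p t u) (.sup p t u')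

theorem lift_lift (t : Tm2) : ∀ i j, i ≤ j →
    lift2 i (lift2 j t) = lift2 (j+1) (lift2 i t) := by
  induction t with
  | var n =>
      intro i j h
      simp only [lift2]
      split_ifs <;> simp only [lift2] <;> split_ifs <;>
        first | rfl | omega | (congr 1; omega)
  | lam t ih =>
      intro i j h; simp only [lift2]; rw [ih (i+1) (j+1) (by omega)]
  | app t u iht ihu => intro i j h; simp only [lift2, iht _ _ h, ihu _ _ h]
  | one => intros; rfl
  | zero => intros; rfl
  | ite c a b ihc iha ihb =>
      intro i j h; simp only [lift2, ihc _ _ h, iha _ _ h, ihb _ _ h]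
  | coin => intros; rfl
  | sup p t u iht ihu => intro i j h; simp only [lift2, iht _ _ h, ihu _ _ h]

theorem lift_subst (t : Tm2) : ∀ d k s, d ≤ k →
    lift2 d (subst2 t k s) = subst2 (lift2 d t) (k+1) (lift2 d s) := by
  induction t with
  | var n =>
      intro d k s h
      simp only [subst2, lift2]
      split_ifs <;> simp only [lift2, subst2] <;> split_ifs <;>
        first | rfl | omega | (congr 1; omega)
  | lam t ih =>
      intro d k s h
      simp only [subst2, lift2, ih _ _ _ (by omega : d+1 ≤ k+1)]
      rw [lift_lift s 0 d (Nat.zero_le d)]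
  | app t u iht ihu => intro d k s h; simp only [subst2, lift2, iht _ _ _ h, ihu _ _ _ h]
  | one => intros; rfl
  | zero => intros; rfl
  | ite c a b ihc iha ihb =>
      intro d k s h; simp only [subst2, lift2, ihc _ _ _ h, iha _ _ _ h, ihb _ _ _ h]
  | coin => intros; rfl
  | sup p t u iht ihu => intro d k s h; simp only [subst2, lift2, iht _ _ _ h, ihu _ _ _ h]

theorem lift_subst' (t : Tm2) : ∀ d k s, k ≤ d →
    lift2 d (subst2 t k s) = subst2 (lift2 (d+1) t) k (lift2 d s) := by
  induction t with
  | var n =>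
      intro d k s h
      simp only [subst2, lift2]
      split_ifs <;> simp only [lift2, subst2] <;> split_ifs <;>
        first | rfl | omega | (congr 1; omega)
  | lam t ih =>
      intro d k s h
      simp only [subst2, lift2, ih _ _ _ (by omega : k+1 ≤ d+1)]
      rw [lift_lift s 0 d (Nat.zero_le d)]
  | app t u iht ihu => intro d k s h; simp only [subst2, lift2, iht _ _ _ h, ihu _ _ _ h]
  | one => intros; rfl
  | zero => intros; rfl
  | ite c a b ihc iha ihb =>
      intro d k s h; simp only [subst2, lift2, ihc _ _ _ h, iha _ _ _ h, ihb _ _ _ h]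
  | coin => intros; rfl
  | sup p t u iht ihu => intro d k s h; simp only [subst2, lift2, iht _ _ _ h, ihu _ _ _ h]

theorem subst_lift_cancel (t : Tm2) : ∀ k s, subst2 (lift2 k t) k s = t := by
  induction t with
  | var n =>
      intro k s
      simp only [lift2]
      split_ifs <;> simp only [subst2] <;> split_ifs <;>
        first | rfl | omega | (congr 1; omega)
  | lam t ih => intro k s; simp only [lift2, subst2, ih]
  | app t u iht ihu => intro k s; simp only [lift2, subst2, iht, ihu]
  | one => intros; rfl
  | zero => intros; rfl
  | ite c a b ihc iha ihb => intro k s; simp only [lift2, subst2, ihc, iha, ihb]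
  | coin => intros; rfl
  | sup p t u iht ihu => intro k s; simp only [lift2, subst2, iht, ihu]

theorem subst_subst (t : Tm2) : ∀ j k u s, j ≤ k →
    subst2 (subst2 t j u) k s
      = subst2 (subst2 t (k+1) (lift2 j s)) j (subst2 u k s) := by
  induction t with
  | var n =>
      intro j k u s h
      simp only [subst2]
      by_cases h1 : n = j
      · subst h1
        simp only [if_pos rfl, if_neg (by omega : ¬ n = k+1),
          if_neg (by omega : ¬ k+1 < n)]
        simp [subst2]
      · by_cases h2 : n = k+1
        · subst h2
          simp only [if_neg h1, if_pos (by omega : j < k+1), if_pos rfl]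
          simp only [subst2]
          rw [if_pos (by omega : k+1-1 = k)]
          exact (subst_lift_cancel s j (subst2 u k s)).symm
        · split_ifs <;> simp only [subst2] <;> split_ifs <;>
            first | rfl | omega | (congr 1; omega)
  | lam t ih =>
      intro j k u s h
      simp only [subst2]
      rw [ih _ _ _ _ (by omega : j+1 ≤ k+1)]
      rw [lift_lift s 0 j (Nat.zero_le j), lift_subst u 0 k s (Nat.zero_le k)]
  | app t u iht ihu => intro j k u' s h; simp only [subst2, iht _ _ _ _ h, ihu _ _ _ _ h]
  | one => intros; rfl
  | zero => intros; rfl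
  | ite c a b ihc iha ihb =>
      intro j k u s h; simp only [subst2, ihc _ _ _ _ h, iha _ _ _ _ h, ihb _ _ _ _ h]
  | coin => intros; rfl
  | sup p t u iht ihu => intro j k u' s h; simp only [subst2, iht _ _ _ _ h, ihu _ _ _ _ h]

inductive Par : Tm2 → Tm2 → Prop
  | var (n) : Par (.var n) (.var n)
  | one : Par .one .one
  | zero : Par .zero .zero
  | coin : Par .coin .coin
  | coinStep : Par .coin (.sup (1/2) .zero .one)
  | lam {t t'} : Par t t' → Par (.lam t) (.lam t')
  | app {t t' u u'} : Par t t' → Par u u' → Par (.app t u) (.app t' u')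
  | ite {c c' a a' b b'} : Par c c' → Par a a' → Par b b' →
      Par (.ite c a b) (.ite c' a' b')
  | sup {t t' u u'} (p) : Par t t' → Par u u' → Par (.sup p t u) (.sup p t' u')
  | beta {t t' u u'} : Par t t' → Par u u' →
      Par (.app (.lam t) u) (subst2 t' 0 u')
  | iteOne {a a'} (b) : Par a a' → Par (.ite .one a b) a'
  | iteZero {b b'} (a) : Par b b' → Par (.ite .zero a b) b'

theorem Par.refl : ∀ t, Par t t := by
  intro t
  induction t with
  | var n => exact .var n
  | lam t ih => exact .lam ih
  | app t u iht ihu => exact .app iht ihu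
  | one => exact .one
  | zero => exact .zero
  | ite c a b ihc iha ihb => exact .ite ihc iha ihb
  | coin => exact .coin
  | sup p t u iht ihu => exact .sup p iht ihu

theorem Par.lift {t t'} (h : Par t t') : ∀ d, Par (lift2 d t) (lift2 d t') := by
  induction h with
  | var n => intro d; simp only [lift2]; split <;> exact .var _
  | one => intro d; exact .one
  | zero => intro d; exact .zero
  | coin => intro d; exact .coin
  | coinStep => intro d; exact .coinStep
  | lam _ ih => intro d; exact .lam (ih (d+1))
  | app _ _ iht ihu => intro d; exact .app (iht d) (ihu d)
  | ite _ _ _ ihc iha ihb => intro d; exact .ite (ihc d) (iha d) (ihb d)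
  | sup p _ _ iht ihu => intro d; exact .sup p (iht d) (ihu d)
  | beta _ _ iht ihu =>
      intro d
      rw [lift_subst' _ d 0 _ (Nat.zero_le d)]
      exact .beta (iht (d+1)) (ihu d)
  | iteOne b _ ih => intro d; exact .iteOne _ (ih d)
  | iteZero a _ ih => intro d; exact .iteZero _ (ih d)

theorem Par.subst {t t'} (ht : Par t t') :
    ∀ k {s s'}, Par s s' → Par (subst2 t k s) (subst2 t' k s') := by
  induction ht with
  | var n =>
      intro k s s' hs; simp only [subst2]; split_ifs
      · exact hs
      · exact .var _
      · exact .var _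
  | one => intro k s s' hs; exact .one
  | zero => intro k s s' hs; exact .zero
  | coin => intro k s s' hs; exact .coin
  | coinStep => intro k s s' hs; exact .coinStep
  | lam _ ih => intro k s s' hs; exact .lam (ih (k+1) (hs.lift 0))
  | app _ _ iht ihu => intro k s s' hs; exact .app (iht k hs) (ihu k hs)
  | ite _ _ _ ihc iha ihb =>
      intro k s s' hs; exact .ite (ihc k hs) (iha k hs) (ihb k hs)
  | sup p _ _ iht ihu => intro k s s' hs; exact .sup p (iht k hs) (ihu k hs)
  | beta _ _ iht ihu =>
      intro k s s' hs
      rw [subst_subst _ 0 k _ _ (Nat.zero_le k)]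
      exact .beta (iht (k+1) (hs.lift 0)) (ihu k hs)
  | iteOne b _ ih => intro k s s' hs; exact .iteOne _ (ih k hs)
  | iteZero a _ ih => intro k s s' hs; exact .iteZero _ (ih k hs)

/-- Complete development. -/
def cd : Tm2 → Tm2
  | .var n => .var n
  | .lam t => .lam (cd t)
  | .app (.lam t) u => subst2 (cd t) 0 (cd u)
  | .app t u => .app (cd t) (cd u)
  | .one => .one
  | .zero => .zero
  | .ite .one a _ => cd a
  | .ite .zero _ b => cd b
  | .ite c a b => .ite (cd c) (cd a) (cd b)
  | .coin => .sup (1/2) .zero .one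
  | .sup p t u => .sup p (cd t) (cd u)

theorem par_lam_inv {t u} (h : Par (.lam t) u) : ∃ t', u = .lam t' ∧ Par t t' := by
  cases h with
  | lam h => exact ⟨_, rfl, h⟩

theorem par_one_inv {u} (h : Par .one u) : u = .one := by cases h; rfl
theorem par_zero_inv {u} (h : Par .zero u) : u = .zero := by cases h; rfl

theorem triangle {t s} (h : Par t s) : Par s (cd t) := by
  induction h with
  | var n => exact .var n
  | one => exact .one
  | zero => exact .zero
  | coin => exact .coinStep
  | coinStep => exact .sup _ .zero .one
  | lam _ ih => exact .lam ih
  | app ht hu iht ihu =>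
      rename_i t t' u u'
      cases t with
      | lam t0 =>
          obtain ⟨t0', rfl, hp⟩ := par_lam_inv ht
          obtain ⟨t0c, he, hq⟩ := par_lam_inv iht
          simp only [cd] at he ⊢
          cases he
          exact .beta hq ihu
      | var n => exact .app iht ihu
      | app a b => exact .app iht ihu
      | one => exact .app iht ihu
      | zero => exact .app iht ihu
      | ite c a b => exact .app iht ihu
      | coin => exact .app iht ihu
      | sup p a b => exact .app iht ihu
  | ite hc ha hb ihc iha ihb =>
      rename_i c c' a a' b b'
      cases c with
      | one => cases par_one_inv hc; exact .iteOne _ iha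
      | zero => cases par_zero_inv hc; exact .iteZero _ ihb
      | var n => exact .ite ihc iha ihb
      | lam t0 => exact .ite ihc iha ihb
      | app x y => exact .ite ihc iha ihb
      | ite x y z => exact .ite ihc iha ihb
      | coin => exact .ite ihc iha ihb
      | sup p x y => exact .ite ihc iha ihb
  | sup p _ _ iht ihu => exact .sup p iht ihu
  | beta _ _ iht ihu => exact Par.subst iht 0 ihu
  | iteOne b _ ih => exact ih
  | iteZero a _ ih => exact ih

theorem step_par {t r} (h : Step2 t r) : Par t r := by
  induction h with
  | beta t r => exact .beta (Par.refl t) (Par.refl r)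
  | iteOne a b => exact .iteOne _ (Par.refl a)
  | iteZero a b => exact .iteZero _ (Par.refl b)
  | coin => exact .coinStep
  | lam _ ih => exact .lam ih
  | appL u _ ih => exact .app ih (Par.refl u)
  | appR t _ ih => exact .app (Par.refl t) ih
  | iteC a b _ ih => exact .ite ih (Par.refl a) (Par.refl b)
  | iteA c b _ ih => exact .ite (Par.refl c) ih (Par.refl b)
  | iteB c a _ ih => exact .ite (Par.refl c) (Par.refl a) ih
  | supL p u _ ih => exact .sup p ih (Par.refl u)
  | supR p t _ ih => exact .sup p (Par.refl t) ih

open Relation in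
theorem par_steps {t r} (h : Par t r) : ReflTransGen Step2 t r := by
  induction h with
  | var n => exact .refl
  | one => exact .refl
  | zero => exact .refl
  | coin => exact .refl
  | coinStep => exact .single .coin
  | lam _ ih => exact ReflTransGen.lift Tm2.lam (fun _ _ => Step2.lam) _ _ ih
  | @app t t' u u' _ _ iht ihu =>
      exact (ReflTransGen.lift (fun x => Tm2.app x u) (fun _ _ h => Step2.appL u h) _ _ iht).trans
        (ReflTransGen.lift (fun x => Tm2.app t' x) (fun _ _ h => Step2.appR t' h) _ _ ihu)
  | @ite c c' a a' b b' _ _ _ ihc iha ihb =>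
      exact ((ReflTransGen.lift (fun x => Tm2.ite x a b) (fun _ _ h => Step2.iteC a b h) _ _ ihc).trans
        (ReflTransGen.lift (fun x => Tm2.ite c' x b) (fun _ _ h => Step2.iteA c' b h) _ _ iha)).trans
        (ReflTransGen.lift (fun x => Tm2.ite c' a' x) (fun _ _ h => Step2.iteB c' a' h) _ _ ihb)
  | @sup t t' u u' p _ _ iht ihu =>
      exact (ReflTransGen.lift (fun x => Tm2.sup p x u) (fun _ _ h => Step2.supL p u h) _ _ iht).trans
        (ReflTransGen.lift (fun x => Tm2.sup p t' x) (fun _ _ h => Step2.supR p t' h) _ _ ihu)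
  | @beta t t' u u' _ _ iht ihu =>
      exact (((ReflTransGen.lift (fun x => Tm2.app (Tm2.lam x) u)
          (fun _ _ h => Step2.appL u (Step2.lam h)) _ _ iht).trans
        (ReflTransGen.lift (fun x => Tm2.app (Tm2.lam t') x)
          (fun _ _ h => Step2.appR _ h) _ _ ihu)).trans
        (ReflTransGen.single (Step2.beta t' u')))
  | @iteOne a a' b _ ih =>
      exact (ReflTransGen.single (Step2.iteOne a b)).trans ih
  | @iteZero b b' a _ ih =>
      exact (ReflTransGen.single (Step2.iteZero a b)).trans ih

open Relation in
theorem par_strip {t a b} (h₁ : Par t a) (h₂ : ReflTransGen Par t b) :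
    ∃ c, ReflTransGen Par a c ∧ Par b c := by
  induction h₂ generalizing a with
  | refl => exact ⟨cd t, ReflTransGen.single (triangle h₁), triangle (Par.refl t)⟩
  | tail _ hstep ih =>
      obtain ⟨c, hac, hbc⟩ := ih h₁
      exact ⟨cd _, hac.tail (triangle hbc), triangle hstep⟩

open Relation in
theorem par_confluent {t a b} (h₁ : ReflTransGen Par t a) (h₂ : ReflTransGen Par t b) :
    ∃ c, ReflTransGen Par a c ∧ ReflTransGen Par b c := by
  induction h₁ generalizing b with
  | refl => exact ⟨b, h₂, .refl⟩
  | tail _ hstep ih =>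
      obtain ⟨c, hac, hbc⟩ := ih h₂
      obtain ⟨d, hd1, hd2⟩ := par_strip hstep hac
      exact ⟨d, hd1, hbc.tail hd2⟩

open Relation in
theorem pars_steps {t r} (h : ReflTransGen Par t r) : ReflTransGen Step2 t r := by
  induction h with
  | refl => exact .refl
  | tail _ hstep ih => exact ih.trans (par_steps hstep)

/-- λ¢ with the internalised coin rule coin → 0 ⊕_{1/2} 1
    is confluent. -/
theorem internalised_confluent {t r₁ r₂ : Tm2}
    (h₁ : Relation.ReflTransGen Step2 t r₁)
    (h₂ : Relation.ReflTransGen Step2 t r₂) :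
    ∃ s, Relation.ReflTransGen Step2 r₁ s ∧ Relation.ReflTransGen Step2 r₂ s := by
  obtain ⟨s, hs1, hs2⟩ := par_confluent
    (Relation.ReflTransGen.mono (fun _ _ h => step_par h) _ _ h₁) (Relation.ReflTransGen.mono (fun _ _ h => step_par h) _ _ h₂)
  exact ⟨s, pars_steps hs1, pars_steps hs2⟩
end

section
/- In the sub-affine λ¢, the β/if critical-pair case closes: if t reduces in one step to the distribution [(pᵢ, tᵢ)]ᵢ, then the two reducts of (λx.t) r, namely the distribution [(pᵢ, (λx.tᵢ) r)]ᵢ and [(1, t[r/x])], both reduce to the common distribution [(pᵢ, tᵢ[r/x])]ᵢ. -/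
/-- Typing contexts for the (sub-)affine systems: a partial assignment of
    types to de Bruijn indices. -/
abbrev Ctx := Nat → Option Ty

/-- Extend a context with a (possibly absent) type for the new index 0. -/
def Ctx.cons (A : Option Ty) (Γ : Ctx) : Ctx := fun n =>
  match n with
  | 0 => A
  | m+1 => Γ m

/-- Disjointness of contexts. -/
def Ctx.disj (Γ Δ : Ctx) : Prop := ∀ n, Γ n = none ∨ Δ n = none

/-- Union of (disjoint) contexts. -/
def Ctx.union (Γ Δ : Ctx) : Ctx := fun n => (Γ n).orElse (fun _ => Δ n)

/-- The empty context. -/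
def Ctx.empty : Ctx := fun _ => none

/-- Sub-affine type system: affine, except that the two branches of an
    if-then-else may share their typing context. -/
inductive SubTy : Ctx → Tm → Ty → Prop
  | var {Γ n A} : Γ n = some A → SubTy Γ (.var n) A
  | lam {Γ t A B} : SubTy (Ctx.cons (some A) Γ) t B → SubTy Γ (.lam t) (.arrow A B)
  | app {Γ Δ t u A B} : Ctx.disj Γ Δ →
      SubTy Γ t (.arrow A B) → SubTy Δ u A → SubTy (Ctx.union Γ Δ) (.app t u) B
  | one {Γ} : SubTy Γ .one .bool
  | zero {Γ} : SubTy Γ .zero .bool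
  | coin {Γ} : SubTy Γ .coin .bool
  | ite {Γ Δ c a b A} : Ctx.disj Γ Δ →
      SubTy Γ c .bool → SubTy Δ a A → SubTy Δ b A →
      SubTy (Ctx.union Γ Δ) (.ite c a b) A

theorem lift_lift_s9 (t : Tm) : ∀ d e, d ≤ e → lift d (lift e t) = lift (e+1) (lift d t) := by
  induction t with
  | var n =>
    intro d e h
    simp only [lift]
    split_ifs <;> simp only [lift] <;> split_ifs <;>
      first | rfl | (simp_all; omega) | omega
  | lam t ih => intro d e h; simp only [lift, ih (d+1) (e+1) (by omega)]
  | app a b iha ihb => intro d e h; simp only [lift, iha d e h, ihb d e h]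
  | one => intros; rfl
  | zero => intros; rfl
  | ite c a b ihc iha ihb =>
    intro d e h; simp only [lift, ihc d e h, iha d e h, ihb d e h]
  | coin => intros; rfl

theorem subst_lift (t : Tm) : ∀ i w, subst (lift i t) i w = t := by
  induction t with
  | var n =>
    intro i w
    simp only [lift]
    split_ifs <;> simp only [subst] <;> split_ifs <;>
      first | rfl | (simp_all; omega) | omega
  | lam t ih => intro i w; simp only [lift, subst, ih]
  | app a b iha ihb => intro i w; simp only [lift, subst, iha, ihb]
  | one => intros; rfl
  | zero => intros; rfl
  | ite c a b ihc iha ihb => intro i w; simp only [lift, subst, ihc, iha, ihb]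
  | coin => intros; rfl

theorem lift_subst_s9 (b : Tm) : ∀ d k s, d ≤ k →
    lift d (subst b k s) = subst (lift d b) (k+1) (lift d s) := by
  induction b with
  | var n =>
    intro d k s h
    simp only [subst, lift]
    split_ifs <;> simp only [subst, lift] <;> split_ifs <;>
      first | rfl | (simp_all; omega) | omega
  | lam t ih =>
    intro d k s h
    simp only [lift, subst, ih (d+1) (k+1) (lift 0 s) (by omega)]
    rw [lift_lift_s9 s 0 d (by omega)]
  | app a b iha ihb => intro d k s h; simp only [lift, subst, iha _ _ _ h, ihb _ _ _ h]
  | one => intros; rfl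
  | zero => intros; rfl
  | ite c a b ihc iha ihb =>
    intro d k s h; simp only [lift, subst, ihc _ _ _ h, iha _ _ _ h, ihb _ _ _ h]
  | coin => intros; rfl

theorem subst_subst_s9 (a : Tm) : ∀ i k b s, i ≤ k →
    subst (subst a i b) k s = subst (subst a (k+1) (lift i s)) i (subst b k s) := by
  induction a with
  | var n =>
    intro i k b s h
    rcases Nat.lt_trichotomy n i with h1 | h1 | h1
    · have : subst (.var n) i b = .var n := by simp only [subst]; split_ifs <;> first | rfl | omega
      rw [this]
      have : subst (.var n) (k+1) (lift i s) = .var n := by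
        simp only [subst]; split_ifs <;> first | rfl | omega
      rw [this]
      simp only [subst]; split_ifs <;> first | rfl | omega
    · subst h1
      have h2 : subst (.var n) n b = b := by simp only [subst]; split_ifs <;> first | rfl | omega
      rw [h2]
      have : subst (.var n) (k+1) (lift n s) = .var n := by
        simp only [subst]; split_ifs <;> first | rfl | omega
      rw [this]
      simp only [subst]; split_ifs <;> first | rfl | omega
    · -- i < n
      have h2 : subst (.var n) i b = .var (n-1) := by
        simp only [subst]; split_ifs <;> first | rfl | omega
      rw [h2]
      rcases Nat.lt_trichotomy n (k+1) with h3 | h3 | h3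
      · -- n ≤ k, i < n : LHS subst (var (n-1)) k s = var (n-1)
        have : subst (.var (n-1)) k s = .var (n-1) := by
          simp only [subst]; split_ifs <;> first | rfl | (exfalso; omega)
        rw [this]
        have : subst (.var n) (k+1) (lift i s) = .var n := by
          simp only [subst]; split_ifs <;> first | rfl | (exfalso; omega)
        rw [this]
        simp only [subst]; split_ifs <;> first | rfl | (simp_all; omega) | (exfalso; omega)
      · -- n = k+1
        subst h3
        have : subst (.var (k+1-1)) k s = s := by
          simp only [subst]; split_ifs <;> first | rfl | (exfalso; omega)
        rw [this]
        have : subst (.var (k+1)) (k+1) (lift i s) = lift i s := by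
          simp only [subst]; split_ifs <;> first | rfl | (exfalso; omega)
        rw [this, subst_lift]
      · -- n > k+1
        have : subst (.var (n-1)) k s = .var (n-2) := by
          simp only [subst]; split_ifs <;> first | (simp_all; omega) | (exfalso; omega)
        rw [this]
        have : subst (.var n) (k+1) (lift i s) = .var (n-1) := by
          simp only [subst]; split_ifs <;> first | rfl | (exfalso; omega)
        rw [this]
        simp only [subst]; split_ifs <;> first | (simp_all; omega) | (exfalso; omega)
  | lam t ih =>
    intro i k b s h
    simp only [subst, ih (i+1) (k+1) (lift 0 b) (lift 0 s) (by omega)]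
    rw [lift_lift_s9 s 0 i (by omega), lift_subst_s9 b 0 k s (by omega)]
  | app a b iha ihb => intro i k b' s h; simp only [subst, iha _ _ _ _ h, ihb _ _ _ _ h]
  | one => intros; rfl
  | zero => intros; rfl
  | ite c a b ihc iha ihb =>
    intro i k b' s h; simp only [subst, ihc _ _ _ _ h, iha _ _ _ _ h, ihb _ _ _ _ h]
  | coin => intros; rfl

theorem tstep_subst {t : Tm} {D : PDist} (h : TStep t D) :
    ∀ k s, TStep (subst t k s) (D.mapDomain (fun x => subst x k s)) := by
  induction h with
  | beta a b =>
    intro k s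
    rw [Finsupp.mapDomain_single]
    have := TStep.beta (subst a (k+1) (lift 0 s)) (subst b k s)
    rw [← subst_subst_s9 a 0 k b s (by omega)] at this
    exact this
  | iteOne a b => intro k s; rw [Finsupp.mapDomain_single]; exact TStep.iteOne _ _
  | iteZero a b => intro k s; rw [Finsupp.mapDomain_single]; exact TStep.iteZero _ _
  | coin =>
    intro k s
    rw [Finsupp.mapDomain_add, Finsupp.mapDomain_single, Finsupp.mapDomain_single]
    exact TStep.coin
  | lam h ih =>
    intro k s
    have h2 := TStep.lam (ih (k+1) (lift 0 s))
    rw [← Finsupp.mapDomain_comp] at h2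
    show TStep (Tm.lam (subst _ (k+1) (lift 0 s))) _
    rw [← Finsupp.mapDomain_comp]
    have hf : ((fun x => subst x k s) ∘ Tm.lam)
        = (Tm.lam ∘ fun x => subst x (k+1) (lift 0 s)) := by
      funext x; simp [subst]
    rw [hf]; exact h2
  | @appL t' D' u h ih =>
    intro k s
    have h2 := TStep.appL (subst u k s) (ih k s)
    rw [← Finsupp.mapDomain_comp] at h2
    show TStep (Tm.app (subst t' k s) (subst u k s)) _
    rw [← Finsupp.mapDomain_comp]
    have hf : ((fun x => subst x k s) ∘ fun s' => Tm.app s' u)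
        = ((fun s' => Tm.app s' (subst u k s)) ∘ fun x => subst x k s) := by
      funext x; simp [subst]
    rw [hf]; exact h2
  | @appR u' D' t' h ih =>
    intro k s
    have h2 := TStep.appR (subst t' k s) (ih k s)
    rw [← Finsupp.mapDomain_comp] at h2
    show TStep (Tm.app (subst t' k s) (subst u' k s)) _
    rw [← Finsupp.mapDomain_comp]
    have hf : ((fun x => subst x k s) ∘ fun s' => Tm.app t' s')
        = ((fun s' => Tm.app (subst t' k s) s') ∘ fun x => subst x k s) := by
      funext x; simp [subst]
    rw [hf]; exact h2
  | @iteC c' D' a b h ih =>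
    intro k s
    have h2 := TStep.iteC (subst a k s) (subst b k s) (ih k s)
    rw [← Finsupp.mapDomain_comp] at h2
    show TStep (Tm.ite (subst c' k s) (subst a k s) (subst b k s)) _
    rw [← Finsupp.mapDomain_comp]
    have hf : ((fun x => subst x k s) ∘ fun s' => Tm.ite s' a b)
        = ((fun s' => Tm.ite s' (subst a k s) (subst b k s)) ∘ fun x => subst x k s) := by
      funext x; simp [subst]
    rw [hf]; exact h2
  | @iteA a' D' c b h ih =>
    intro k s
    have h2 := TStep.iteA (subst c k s) (subst b k s) (ih k s)
    rw [← Finsupp.mapDomain_comp] at h2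
    show TStep (Tm.ite (subst c k s) (subst a' k s) (subst b k s)) _
    rw [← Finsupp.mapDomain_comp]
    have hf : ((fun x => subst x k s) ∘ fun s' => Tm.ite c s' b)
        = ((fun s' => Tm.ite (subst c k s) s' (subst b k s)) ∘ fun x => subst x k s) := by
      funext x; simp [subst]
    rw [hf]; exact h2
  | @iteB b' D' c a h ih =>
    intro k s
    have h2 := TStep.iteB (subst c k s) (subst a k s) (ih k s)
    rw [← Finsupp.mapDomain_comp] at h2
    show TStep (Tm.ite (subst c k s) (subst a k s) (subst b' k s)) _
    rw [← Finsupp.mapDomain_comp]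
    have hf : ((fun x => subst x k s) ∘ fun s' => Tm.ite c a s')
        = ((fun s' => Tm.ite (subst c k s) (subst a k s) s') ∘ fun x => subst x k s) := by
      funext x; simp [subst]
    rw [hf]; exact h2

/-- `D1 u v`: `u` and `v` are identical except at exactly one position,
where `u` has `one` and `v` has `zero`. -/
inductive D1 : Tm → Tm → Prop
  | base : D1 .one .zero
  | lam {t t'} : D1 t t' → D1 (.lam t) (.lam t')
  | appL {t t'} (u) : D1 t t' → D1 (.app t u) (.app t' u)
  | appR {u u'} (t) : D1 u u' → D1 (.app t u) (.app t u')
  | iteC {c c'} (a b) : D1 c c' → D1 (.ite c a b) (.ite c' a b)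
  | iteA {a a'} (c b) : D1 a a' → D1 (.ite c a b) (.ite c a' b)
  | iteB {b b'} (c a) : D1 b b' → D1 (.ite c a b) (.ite c a b')

theorem d1_ne {a b : Tm} (h : D1 a b) : a ≠ b := by
  induction h with
  | base => simp
  | lam _ ih => simpa using ih
  | appL u _ ih => simpa using ih
  | appR t _ ih => simpa using ih
  | iteC a b _ ih => intro hc; exact ih (by injection hc)
  | iteA c b _ ih => intro hc; injection hc with h1 h2 h3; exact ih h2
  | iteB c a _ ih => intro hc; injection hc with h1 h2 h3; exact ih h3

theorem d1_antisymm {a b : Tm} (h : D1 a b) : ¬ D1 b a := by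
  induction h with
  | base => intro h2; cases h2
  | lam h ih => intro h2; cases h2 with | lam h3 => exact ih h3
  | appL u h ih =>
    intro h2
    cases h2 with
    | appL _ h3 => exact ih h3
    | appR _ h3 => exact d1_ne h rfl
  | appR t h ih =>
    intro h2
    cases h2 with
    | appL _ h3 => exact d1_ne h3 rfl
    | appR _ h3 => exact ih h3
  | iteC a b h ih =>
    intro h2
    cases h2 with
    | iteC _ _ h3 => exact ih h3
    | iteA _ _ h3 => exact d1_ne h rfl
    | iteB _ _ h3 => exact d1_ne h rfl
  | iteA c b h ih =>
    intro h2
    cases h2 with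
    | iteC _ _ h3 => exact d1_ne h3 rfl
    | iteA _ _ h3 => exact ih h3
    | iteB _ _ h3 => exact d1_ne h rfl
  | iteB c a h ih =>
    intro h2
    cases h2 with
    | iteC _ _ h3 => exact d1_ne h3 rfl
    | iteA _ _ h3 => exact d1_ne h3 rfl
    | iteB _ _ h3 => exact ih h3

theorem d1_subst {u v : Tm} (h : D1 u v) : ∀ k s, D1 (subst u k s) (subst v k s) := by
  induction h with
  | base => intro k s; exact D1.base
  | lam _ ih => intro k s; exact D1.lam (ih _ _)
  | appL u _ ih => intro k s; exact D1.appL _ (ih _ _)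
  | appR t _ ih => intro k s; exact D1.appR _ (ih _ _)
  | iteC a b _ ih => intro k s; exact D1.iteC _ _ (ih _ _)
  | iteA c b _ ih => intro k s; exact D1.iteA _ _ (ih _ _)
  | iteB c a _ ih => intro k s; exact D1.iteB _ _ (ih _ _)

theorem tstep_char {t : Tm} {E : PDist} (h : TStep t E) :
    (∃ u, E = Finsupp.single u 1) ∨
    (∃ u v, D1 u v ∧ E = Finsupp.single u (1/2) + Finsupp.single v (1/2)) := by
  induction h with
  | beta a b => exact Or.inl ⟨_, rfl⟩
  | iteOne a b => exact Or.inl ⟨_, rfl⟩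
  | iteZero a b => exact Or.inl ⟨_, rfl⟩
  | coin => exact Or.inr ⟨_, _, D1.base, rfl⟩
  | lam _ ih =>
    rcases ih with ⟨u, rfl⟩ | ⟨u, v, hd, rfl⟩
    · exact Or.inl ⟨_, Finsupp.mapDomain_single⟩
    · exact Or.inr ⟨_, _, D1.lam hd, by
        rw [Finsupp.mapDomain_add, Finsupp.mapDomain_single, Finsupp.mapDomain_single]⟩
  | appL u' _ ih =>
    rcases ih with ⟨u, rfl⟩ | ⟨u, v, hd, rfl⟩
    · exact Or.inl ⟨_, Finsupp.mapDomain_single⟩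
    · exact Or.inr ⟨_, _, D1.appL _ hd, by
        rw [Finsupp.mapDomain_add, Finsupp.mapDomain_single, Finsupp.mapDomain_single]⟩
  | appR t' _ ih =>
    rcases ih with ⟨u, rfl⟩ | ⟨u, v, hd, rfl⟩
    · exact Or.inl ⟨_, Finsupp.mapDomain_single⟩
    · exact Or.inr ⟨_, _, D1.appR _ hd, by
        rw [Finsupp.mapDomain_add, Finsupp.mapDomain_single, Finsupp.mapDomain_single]⟩
  | iteC a b _ ih =>
    rcases ih with ⟨u, rfl⟩ | ⟨u, v, hd, rfl⟩
    · exact Or.inl ⟨_, Finsupp.mapDomain_single⟩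
    · exact Or.inr ⟨_, _, D1.iteC _ _ hd, by
        rw [Finsupp.mapDomain_add, Finsupp.mapDomain_single, Finsupp.mapDomain_single]⟩
  | iteA c b _ ih =>
    rcases ih with ⟨u, rfl⟩ | ⟨u, v, hd, rfl⟩
    · exact Or.inl ⟨_, Finsupp.mapDomain_single⟩
    · exact Or.inr ⟨_, _, D1.iteA _ _ hd, by
        rw [Finsupp.mapDomain_add, Finsupp.mapDomain_single, Finsupp.mapDomain_single]⟩
  | iteB c a _ ih =>
    rcases ih with ⟨u, rfl⟩ | ⟨u, v, hd, rfl⟩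
    · exact Or.inl ⟨_, Finsupp.mapDomain_single⟩
    · exact Or.inr ⟨_, _, D1.iteB _ _ hd, by
        rw [Finsupp.mapDomain_add, Finsupp.mapDomain_single, Finsupp.mapDomain_single]⟩

theorem dstep_of_tstep {a : Tm} {E : PDist} (h : TStep a E) :
    DStep (Finsupp.single a 1) E :=
  ⟨a, E, by simp, h, by simp [Finsupp.erase_single]⟩

theorem dsteps_pair {a b a' b' : Tm} {p : ℚ} (hp : p ≠ 0) (hab : a ≠ b)
    (ha : TStep a (Finsupp.single a' 1)) (hb : TStep b (Finsupp.single b' 1))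
    (hne : a' ≠ b) :
    DSteps (Finsupp.single a p + Finsupp.single b p)
      (Finsupp.single a' p + Finsupp.single b' p) := by
  have step1 : DStep (Finsupp.single a p + Finsupp.single b p)
      (Finsupp.single b p + Finsupp.single a' p) := by
    refine ⟨a, Finsupp.single a' 1, ?_, ha, ?_⟩
    · simp [Finsupp.single_apply, hab, Ne.symm hab, hp]
    · rw [Finsupp.erase_add, Finsupp.erase_single, Finsupp.erase_single_ne hab]
      simp [Finsupp.single_apply, Ne.symm hab, Finsupp.smul_single]
  have step2 : DStep (Finsupp.single b p + Finsupp.single a' p)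
      (Finsupp.single a' p + Finsupp.single b' p) := by
    refine ⟨b, Finsupp.single b' 1, ?_, hb, ?_⟩
    · simp [Finsupp.single_apply, hne, hp]
    · rw [Finsupp.erase_add, Finsupp.erase_single, Finsupp.erase_single_ne (Ne.symm hne)]
      simp [Finsupp.single_apply, hne, Finsupp.smul_single]
  exact Relation.ReflTransGen.head step1 (Relation.ReflTransGen.single step2)

/-- in the sub-affine λ¢ the β critical pair closes:
    if t one-step reduces to the distribution D = [(pᵢ,tᵢ)]ᵢ, then the
    two reducts of (λx.t) r — the distribution [(pᵢ, (λx.tᵢ) r)]ᵢ and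
    [(1, t[r/x])] — both reduce to the common distribution
    [(pᵢ, tᵢ[r/x])]ᵢ. -/
theorem beta_critical_pair_closes {t : Tm} {D : PDist} (r : Tm) (h : TStep t D) :
    DStep (Finsupp.single (Tm.app (.lam t) r) 1)
      (D.mapDomain (fun s => Tm.app (.lam s) r)) ∧
    DStep (Finsupp.single (Tm.app (.lam t) r) 1)
      (Finsupp.single (subst t 0 r) 1) ∧
    DSteps (D.mapDomain (fun s => Tm.app (.lam s) r))
      (D.mapDomain (fun s => subst s 0 r)) ∧
    DSteps (Finsupp.single (subst t 0 r) 1)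
      (D.mapDomain (fun s => subst s 0 r)) := by
  refine ⟨?_, ?_, ?_, ?_⟩
  · have h1 := TStep.appL r (TStep.lam h)
    rw [← Finsupp.mapDomain_comp] at h1
    have hf : ((fun s => Tm.app s r) ∘ Tm.lam) = (fun s => Tm.app (Tm.lam s) r) := rfl
    rw [hf] at h1
    exact dstep_of_tstep h1
  · exact dstep_of_tstep (TStep.beta t r)
  · rcases tstep_char h with ⟨u, rfl⟩ | ⟨u, v, hd, rfl⟩
    · rw [Finsupp.mapDomain_single, Finsupp.mapDomain_single]
      exact Relation.ReflTransGen.single (dstep_of_tstep (TStep.beta u r))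
    · rw [Finsupp.mapDomain_add, Finsupp.mapDomain_add,
        Finsupp.mapDomain_single, Finsupp.mapDomain_single,
        Finsupp.mapDomain_single, Finsupp.mapDomain_single]
      have huv : u ≠ v := d1_ne hd
      have hfuv : Tm.app (Tm.lam u) r ≠ Tm.app (Tm.lam v) r := by
        simp [huv]
      by_cases hc : subst u 0 r = Tm.app (Tm.lam v) r
      · -- reduce the second redex first
        have hgv : subst v 0 r ≠ Tm.app (Tm.lam u) r := by
          intro hgv
          have h1 : D1 (Tm.app (Tm.lam u) r) (Tm.app (Tm.lam v) r) :=
            D1.appL r (D1.lam hd)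
          have h2 : D1 (subst u 0 r) (subst v 0 r) := d1_subst hd 0 r
          rw [hc, hgv] at h2
          exact d1_antisymm h1 h2
        have := dsteps_pair (a := Tm.app (Tm.lam v) r) (b := Tm.app (Tm.lam u) r)
          (a' := subst v 0 r) (b' := subst u 0 r) (p := (1:ℚ)/2) (by norm_num)
          (Ne.symm hfuv) (TStep.beta v r) (TStep.beta u r) hgv
        rw [add_comm (Finsupp.single (Tm.app (Tm.lam v) r) ((1:ℚ)/2)),
          add_comm (Finsupp.single (subst v 0 r) ((1:ℚ)/2))] at this
        exact this
      · exact dsteps_pair (by norm_num) hfuv (TStep.beta u r) (TStep.beta v r) hc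
  · exact Relation.ReflTransGen.single
      ⟨subst t 0 r, D.mapDomain (fun s => subst s 0 r), by simp,
        tstep_subst h 0 r, by simp [Finsupp.erase_single]⟩
end

section
/- In the sub-affine λ¢, the calculus is not syntactically confluent: the closed term (λx.λy. if y then x else not x) coin, where not = λx. if x then 0 else 1, reduces to the normal distribution [(1/2, λy.if y then 0 else 1), (1/2, λy.if y then 1 else 0)] via one path and to [(1/4, λy.if y then 0 else 0), (1/4, λy.if y then 0 else 1), (1/4, λy.if y then 1 else 0), (1/4, λy.if y then 1 else 1)] via another, and these distributions are distinct. -/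
/-- D₁ = [(1/2, λy.if y then 0 else 1), (1/2, λy.if y then 1 else 0)]. -/
noncomputable def D₁ : PDist :=
  Finsupp.single (Tm.lam (.ite (.var 0) .zero .one)) (1/2) +
  Finsupp.single (Tm.lam (.ite (.var 0) .one .zero)) (1/2)

/-- D₂ = the uniform distribution on the four terms λy.if y then a else b. -/
noncomputable def D₂ : PDist :=
  Finsupp.single (Tm.lam (.ite (.var 0) .zero .zero)) (1/4) +
  Finsupp.single (Tm.lam (.ite (.var 0) .zero .one)) (1/4) +
  Finsupp.single (Tm.lam (.ite (.var 0) .one .zero)) (1/4) +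
  Finsupp.single (Tm.lam (.ite (.var 0) .one .one)) (1/4)

/-- not = λx. if x then 0 else 1. -/
def notT : Tm := .lam (.ite (.var 0) .zero .one)

/-- (λx.λy. if y then x else not x) coin. -/
def tenQ : Tm :=
  .app (.lam (.lam (.ite (.var 0) (.var 1) (.app notT (.var 1))))) .coin

/-! ### Auxiliary definitions and lemmas -/

/-- λy. if y then a else b -/
def Bf (a b : Tm) : Tm := .lam (.ite (.var 0) a b)

/-- λx.λy. if y then x else not x -/
def Lt : Tm := .lam (.lam (.ite (.var 0) (.var 1) (.app notT (.var 1))))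

lemma dstep_of_s10 {A B : PDist} (t : Tm) (p : ℚ) (E R : PDist)
    (hp : p ≠ 0) (hR : R t = 0) (hE : TStep t E)
    (hA : A = Finsupp.single t p + R) (hB : B = R + p • E) : DStep A B := by
  refine ⟨t, E, ?_, hE, ?_⟩
  · rw [hA]; simp [hR, hp]
  · have hAt : A t = p := by rw [hA]; simp [hR]
    rw [hB, hAt, hA]
    congr 1
    ext a
    rcases eq_or_ne a t with rfl | h
    · simp [Finsupp.erase_apply, hR]
    · simp [Finsupp.erase_apply, h, Finsupp.single_apply, Ne.symm h]

lemma tstep_b {b E} (a : Tm) (h : TStep b E) :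
    TStep (Bf a b) (E.mapDomain (fun s => Bf a s)) := by
  have := TStep.lam (TStep.iteB (Tm.var 0) a h)
  rwa [← Finsupp.mapDomain_comp] at this

lemma tstep_b_single {b x : Tm} (a : Tm) (h : TStep b (Finsupp.single x 1)) :
    TStep (Bf a b) (Finsupp.single (Bf a x) 1) := by
  simpa [Finsupp.mapDomain_single] using tstep_b a h

lemma tstep_b_coin {b : Tm} (a : Tm)
    (h : TStep b (Finsupp.single Tm.one (1/2) + Finsupp.single Tm.zero (1/2))) :
    TStep (Bf a b) (Finsupp.single (Bf a .one) (1/2) + Finsupp.single (Bf a .zero) (1/2)) := by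
  simpa [Finsupp.mapDomain_add, Finsupp.mapDomain_single] using tstep_b a h

lemma path1 : DSteps (Finsupp.single tenQ 1) D₁ := by
  have s1 : DStep (Finsupp.single tenQ 1)
      (Finsupp.single (.app Lt .one) (1/2) + Finsupp.single (.app Lt .zero) (1/2)) :=
    dstep_of_s10 (Tm.app Lt Tm.coin) 1 _ 0 (by norm_num) (by simp)
      (by simpa [Finsupp.mapDomain_add, Finsupp.mapDomain_single] using
        TStep.appR (u := Tm.coin) Lt TStep.coin)
      (by simp [tenQ, Lt, notT]) (by simp)
  have s2 : DStep (Finsupp.single (.app Lt .one) (1/2) + Finsupp.single (.app Lt .zero) (1/2))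
      (Finsupp.single (.app Lt .zero) (1/2) + Finsupp.single (Bf .one (.app notT .one)) (1/2)) :=
    dstep_of_s10 (Tm.app Lt Tm.one) (1/2) (Finsupp.single (Bf .one (.app notT .one)) 1) _
      (by norm_num) (by simp [Lt, Finsupp.single_apply]) (TStep.beta _ _)
      rfl (by simp [Finsupp.smul_single])
  have s3 : DStep
      (Finsupp.single (.app Lt .zero) (1/2) + Finsupp.single (Bf .one (.app notT .one)) (1/2))
      (Finsupp.single (Bf .one (.app notT .one)) (1/2) + Finsupp.single (Bf .zero (.app notT .zero)) (1/2)) :=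
    dstep_of_s10 (Tm.app Lt Tm.zero) (1/2) (Finsupp.single (Bf .zero (.app notT .zero)) 1)
      (Finsupp.single (Bf .one (.app notT .one)) (1/2))
      (by norm_num) (by simp [Lt, Bf, notT, Finsupp.single_apply]) (TStep.beta _ _)
      (by rw [add_comm]) (by simp [Finsupp.smul_single])
  have s4 : DStep
      (Finsupp.single (Bf .one (.app notT .one)) (1/2) + Finsupp.single (Bf .zero (.app notT .zero)) (1/2))
      (Finsupp.single (Bf .zero (.app notT .zero)) (1/2) + Finsupp.single (Bf .one (.ite .one .zero .one)) (1/2)) :=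
    dstep_of_s10 (Bf .one (.app notT .one)) (1/2) (Finsupp.single (Bf .one (.ite .one .zero .one)) 1) _
      (by norm_num) (by simp [Bf, notT, Finsupp.single_apply]) (tstep_b_single _ (TStep.beta _ _))
      rfl (by simp [Finsupp.smul_single])
  have s5 : DStep
      (Finsupp.single (Bf .zero (.app notT .zero)) (1/2) + Finsupp.single (Bf .one (.ite .one .zero .one)) (1/2))
      (Finsupp.single (Bf .one (.ite .one .zero .one)) (1/2) + Finsupp.single (Bf .zero (.ite .zero .zero .one)) (1/2)) :=
    dstep_of_s10 (Bf .zero (.app notT .zero)) (1/2) (Finsupp.single (Bf .zero (.ite .zero .zero .one)) 1)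
      (Finsupp.single (Bf .one (.ite .one .zero .one)) (1/2))
      (by norm_num) (by simp [Bf, notT, Finsupp.single_apply]) (tstep_b_single _ (TStep.beta _ _))
      (by rw [add_comm]) (by simp [Finsupp.smul_single])
  have s6 : DStep
      (Finsupp.single (Bf .one (.ite .one .zero .one)) (1/2) + Finsupp.single (Bf .zero (.ite .zero .zero .one)) (1/2))
      (Finsupp.single (Bf .zero (.ite .zero .zero .one)) (1/2) + Finsupp.single (Bf .one .zero) (1/2)) :=
    dstep_of_s10 (Bf .one (.ite .one .zero .one)) (1/2) (Finsupp.single (Bf .one .zero) 1) _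
      (by norm_num) (by simp [Bf, Finsupp.single_apply]) (tstep_b_single _ (TStep.iteOne _ _))
      rfl (by simp [Finsupp.smul_single])
  have s7 : DStep
      (Finsupp.single (Bf .zero (.ite .zero .zero .one)) (1/2) + Finsupp.single (Bf .one .zero) (1/2))
      D₁ :=
    dstep_of_s10 (Bf .zero (.ite .zero .zero .one)) (1/2) (Finsupp.single (Bf .zero .one) 1)
      (Finsupp.single (Bf .one .zero) (1/2))
      (by norm_num) (by simp [Bf, Finsupp.single_apply]) (tstep_b_single _ (TStep.iteZero _ _))
      (by rw [add_comm]) (by simp [D₁, Bf, Finsupp.smul_single]; abel)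
  exact .head s1 (.head s2 (.head s3 (.head s4 (.head s5 (.head s6 (.single s7))))))

lemma path2 : DSteps (Finsupp.single tenQ 1) D₂ := by
  have s1 : DStep (Finsupp.single tenQ 1)
      (Finsupp.single (Bf .coin (.app notT .coin)) 1) :=
    dstep_of_s10 (Tm.app Lt Tm.coin) 1 (Finsupp.single (Bf .coin (.app notT .coin)) 1) 0
      (by norm_num) (by simp) (TStep.beta _ _)
      (by simp [tenQ, Lt, notT]) (by simp)
  have s2 : DStep (Finsupp.single (Bf .coin (.app notT .coin)) 1)
      (Finsupp.single (Bf .one (.app notT .coin)) (1/2) + Finsupp.single (Bf .zero (.app notT .coin)) (1/2)) :=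
    dstep_of_s10 (Bf .coin (.app notT .coin)) 1 _ 0 (by norm_num) (by simp)
      (by simpa [Finsupp.mapDomain_add, Finsupp.mapDomain_single, Bf] using
        TStep.lam (TStep.iteA (Tm.var 0) (Tm.app notT Tm.coin) TStep.coin))
      (by simp) (by simp [Bf])
  have s3 : DStep
      (Finsupp.single (Bf .one (.app notT .coin)) (1/2) + Finsupp.single (Bf .zero (.app notT .coin)) (1/2))
      (Finsupp.single (Bf .zero (.app notT .coin)) (1/2) + Finsupp.single (Bf .one (.ite .coin .zero .one)) (1/2)) :=
    dstep_of_s10 (Bf .one (.app notT .coin)) (1/2) (Finsupp.single (Bf .one (.ite .coin .zero .one)) 1) _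
      (by norm_num) (by simp [Bf, Finsupp.single_apply]) (tstep_b_single _ (TStep.beta _ _))
      rfl (by simp [Finsupp.smul_single])
  have s4 : DStep
      (Finsupp.single (Bf .zero (.app notT .coin)) (1/2) + Finsupp.single (Bf .one (.ite .coin .zero .one)) (1/2))
      (Finsupp.single (Bf .one (.ite .coin .zero .one)) (1/2) + Finsupp.single (Bf .zero (.ite .coin .zero .one)) (1/2)) :=
    dstep_of_s10 (Bf .zero (.app notT .coin)) (1/2) (Finsupp.single (Bf .zero (.ite .coin .zero .one)) 1)
      (Finsupp.single (Bf .one (.ite .coin .zero .one)) (1/2))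
      (by norm_num) (by simp [Bf, Finsupp.single_apply]) (tstep_b_single _ (TStep.beta _ _))
      (by rw [add_comm]) (by simp [Finsupp.smul_single])
  have s5 : DStep
      (Finsupp.single (Bf .one (.ite .coin .zero .one)) (1/2) + Finsupp.single (Bf .zero (.ite .coin .zero .one)) (1/2))
      (Finsupp.single (Bf .zero (.ite .coin .zero .one)) (1/2) +
        (Finsupp.single (Bf .one (.ite .one .zero .one)) (1/4) + Finsupp.single (Bf .one (.ite .zero .zero .one)) (1/4))) :=
    dstep_of_s10 (Bf .one (.ite .coin .zero .one)) (1/2)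
      (Finsupp.single (Bf .one (.ite .one .zero .one)) (1/2) + Finsupp.single (Bf .one (.ite .zero .zero .one)) (1/2)) _
      (by norm_num) (by simp [Bf, Finsupp.single_apply])
      (by simpa [Finsupp.mapDomain_add, Finsupp.mapDomain_single] using
        tstep_b (b := Tm.ite .coin .zero .one) Tm.one (TStep.iteC Tm.zero Tm.one TStep.coin))
      rfl (by rw [smul_add, Finsupp.smul_single, Finsupp.smul_single]; norm_num)
  have s6 : DStep
      (Finsupp.single (Bf .zero (.ite .coin .zero .one)) (1/2) +
        (Finsupp.single (Bf .one (.ite .one .zero .one)) (1/4) + Finsupp.single (Bf .one (.ite .zero .zero .one)) (1/4)))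
      (Finsupp.single (Bf .one (.ite .one .zero .one)) (1/4) + Finsupp.single (Bf .one (.ite .zero .zero .one)) (1/4) +
        (Finsupp.single (Bf .zero (.ite .one .zero .one)) (1/4) + Finsupp.single (Bf .zero (.ite .zero .zero .one)) (1/4))) :=
    dstep_of_s10 (Bf .zero (.ite .coin .zero .one)) (1/2)
      (Finsupp.single (Bf .zero (.ite .one .zero .one)) (1/2) + Finsupp.single (Bf .zero (.ite .zero .zero .one)) (1/2))
      (Finsupp.single (Bf .one (.ite .one .zero .one)) (1/4) + Finsupp.single (Bf .one (.ite .zero .zero .one)) (1/4))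
      (by norm_num) (by simp [Bf, Finsupp.single_apply])
      (by simpa [Finsupp.mapDomain_add, Finsupp.mapDomain_single] using
        tstep_b (b := Tm.ite .coin .zero .one) Tm.zero (TStep.iteC Tm.zero Tm.one TStep.coin))
      (by rw [add_comm, add_assoc]) (by rw [smul_add, Finsupp.smul_single, Finsupp.smul_single]; norm_num)
  have s7 : DStep
      (Finsupp.single (Bf .one (.ite .one .zero .one)) (1/4) + Finsupp.single (Bf .one (.ite .zero .zero .one)) (1/4) +
        (Finsupp.single (Bf .zero (.ite .one .zero .one)) (1/4) + Finsupp.single (Bf .zero (.ite .zero .zero .one)) (1/4)))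
      (Finsupp.single (Bf .one (.ite .zero .zero .one)) (1/4) +
        (Finsupp.single (Bf .zero (.ite .one .zero .one)) (1/4) + Finsupp.single (Bf .zero (.ite .zero .zero .one)) (1/4)) +
        Finsupp.single (Bf .one .zero) (1/4)) :=
    dstep_of_s10 (Bf .one (.ite .one .zero .one)) (1/4) (Finsupp.single (Bf .one .zero) 1)
      (Finsupp.single (Bf .one (.ite .zero .zero .one)) (1/4) +
        (Finsupp.single (Bf .zero (.ite .one .zero .one)) (1/4) + Finsupp.single (Bf .zero (.ite .zero .zero .one)) (1/4)))
      (by norm_num) (by simp [Bf, Finsupp.single_apply]) (tstep_b_single _ (TStep.iteOne _ _))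
      (by abel) (by simp [Finsupp.smul_single])
  have s8 : DStep
      (Finsupp.single (Bf .one (.ite .zero .zero .one)) (1/4) +
        (Finsupp.single (Bf .zero (.ite .one .zero .one)) (1/4) + Finsupp.single (Bf .zero (.ite .zero .zero .one)) (1/4)) +
        Finsupp.single (Bf .one .zero) (1/4))
      (Finsupp.single (Bf .zero (.ite .one .zero .one)) (1/4) + Finsupp.single (Bf .zero (.ite .zero .zero .one)) (1/4) +
        Finsupp.single (Bf .one .zero) (1/4) + Finsupp.single (Bf .one .one) (1/4)) :=
    dstep_of_s10 (Bf .one (.ite .zero .zero .one)) (1/4) (Finsupp.single (Bf .one .one) 1)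
      (Finsupp.single (Bf .zero (.ite .one .zero .one)) (1/4) + Finsupp.single (Bf .zero (.ite .zero .zero .one)) (1/4) +
        Finsupp.single (Bf .one .zero) (1/4))
      (by norm_num) (by simp [Bf, Finsupp.single_apply]) (tstep_b_single _ (TStep.iteZero _ _))
      (by abel) (by simp [Finsupp.smul_single])
  have s9 : DStep
      (Finsupp.single (Bf .zero (.ite .one .zero .one)) (1/4) + Finsupp.single (Bf .zero (.ite .zero .zero .one)) (1/4) +
        Finsupp.single (Bf .one .zero) (1/4) + Finsupp.single (Bf .one .one) (1/4))
      (Finsupp.single (Bf .zero (.ite .zero .zero .one)) (1/4) + Finsupp.single (Bf .one .zero) (1/4) +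
        Finsupp.single (Bf .one .one) (1/4) + Finsupp.single (Bf .zero .zero) (1/4)) :=
    dstep_of_s10 (Bf .zero (.ite .one .zero .one)) (1/4) (Finsupp.single (Bf .zero .zero) 1)
      (Finsupp.single (Bf .zero (.ite .zero .zero .one)) (1/4) + Finsupp.single (Bf .one .zero) (1/4) +
        Finsupp.single (Bf .one .one) (1/4))
      (by norm_num) (by simp [Bf, Finsupp.single_apply]) (tstep_b_single _ (TStep.iteOne _ _))
      (by abel) (by simp [Finsupp.smul_single])
  have s10 : DStep
      (Finsupp.single (Bf .zero (.ite .zero .zero .one)) (1/4) + Finsupp.single (Bf .one .zero) (1/4) +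
        Finsupp.single (Bf .one .one) (1/4) + Finsupp.single (Bf .zero .zero) (1/4))
      D₂ :=
    dstep_of_s10 (Bf .zero (.ite .zero .zero .one)) (1/4) (Finsupp.single (Bf .zero .one) 1)
      (Finsupp.single (Bf .one .zero) (1/4) + Finsupp.single (Bf .one .one) (1/4) +
        Finsupp.single (Bf .zero .zero) (1/4))
      (by norm_num) (by simp [Bf, Finsupp.single_apply]) (tstep_b_single _ (TStep.iteZero _ _))
      (by abel) (by simp [D₂, Bf, Finsupp.smul_single]; abel)
  exact .head s1 (.head s2 (.head s3 (.head s4 (.head s5 (.head s6 (.head s7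
    (.head s8 (.head s9 (.single s10)))))))))

lemma normalTm_one : NormalTm Tm.one := by rintro ⟨p, r, h⟩; cases h
lemma normalTm_zero : NormalTm Tm.zero := by rintro ⟨p, r, h⟩; cases h

lemma normalTm_Bf {a b : Tm} (ha : NormalTm a) (hb : NormalTm b) : NormalTm (Bf a b) := by
  rintro ⟨p, r, h⟩
  cases h with
  | lam h =>
    cases h with
    | iteC _ _ h => cases h
    | iteA _ _ h => exact ha ⟨_, _, h⟩
    | iteB _ _ h => exact hb ⟨_, _, h⟩

lemma normalDist_D₁ : NormalDist D₁ := by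
  intro t ht
  rw [Finsupp.mem_support_iff] at ht
  have : t = Bf .zero .one ∨ t = Bf .one .zero := by
    by_contra hc
    push_neg at hc
    obtain ⟨h1, h2⟩ := hc
    simp only [Bf] at h1 h2
    exact ht (by simp [D₁, Finsupp.single_apply, Ne.symm h1, Ne.symm h2])
  rcases this with rfl | rfl <;>
    first
      | exact normalTm_Bf normalTm_zero normalTm_one
      | exact normalTm_Bf normalTm_one normalTm_zero

lemma normalDist_D₂ : NormalDist D₂ := by
  intro t ht
  rw [Finsupp.mem_support_iff] at ht
  have : t = Bf .zero .zero ∨ t = Bf .zero .one ∨ t = Bf .one .zero ∨ t = Bf .one .one := by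
    by_contra hc
    push_neg at hc
    obtain ⟨h1, h2, h3, h4⟩ := hc
    simp only [Bf] at h1 h2 h3 h4
    exact ht (by simp [D₂, Finsupp.single_apply, Ne.symm h1, Ne.symm h2, Ne.symm h3, Ne.symm h4])
  rcases this with rfl | rfl | rfl | rfl <;>
    exact normalTm_Bf (by first | exact normalTm_zero | exact normalTm_one)
      (by first | exact normalTm_zero | exact normalTm_one)

lemma D₁_ne_D₂ : D₁ ≠ D₂ := by
  intro h
  have := DFunLike.congr_fun h (Bf .one .one)
  simp [D₁, D₂, Bf, Finsupp.single_apply] at this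

/-- the sub-affine λ¢ is not syntactically confluent:
    the term (λx.λy.if y then x else not x) coin reduces to the normal
    distribution D₁ via one path and to the normal distribution D₂ via
    another, and D₁ ≠ D₂. -/
theorem subaffine_not_syntactically_confluent :
    DSteps (Finsupp.single tenQ 1) D₁ ∧
    DSteps (Finsupp.single tenQ 1) D₂ ∧
    NormalDist D₁ ∧ NormalDist D₂ ∧ D₁ ≠ D₂ := by
  exact ⟨path1, path2, normalDist_D₁, normalDist_D₂, D₁_ne_D₂⟩
end
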